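/- arXiv:2505.21111 — 4 statements merged into one kernel-verified Lean document; each statement's English description precedes it below -/
import Mathlib

section
/- In the formal power series ring ℤ[[q]], f_2 / f_1² = f_8⁵ / (f_2⁴ f_{16}²) + 2q · f_4² f_{16}² / (f_2⁴ f_8). -/
/-- `f r = ∏_{n ≥ 1} (1 - q^{r n})` in `ℤ[[q]]`, defined coefficientwise: the coefficient of
`q^n` agrees with that of every sufficiently long partial product (for `r ≥ 1`, the factors with
index beyond `n` do not affect the coefficient of `q^n`). -/
noncomputable def f (r : ℕ) : PowerSeries ℤ :=
  PowerSeries.mk fun n =>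
    PowerSeries.coeff n
      (∏ i ∈ Finset.range (n + 1), (1 - (PowerSeries.X : PowerSeries ℤ) ^ (r * (i + 1))))

open PowerSeries Finset

noncomputable section
namespace OPD

abbrev R' := PowerSeries ℤ

def poch (y : R') (n : ℕ) : R' := ∏ i ∈ Finset.range n, (1 - y ^ (i + 1))

def gb (y : R') : ℕ → ℕ → R'
  | 0, 0 => 1
  | 0, _ + 1 => 0
  | _ + 1, 0 => 1
  | m + 1, j + 1 => gb y m j + y ^ (j + 1) * gb y m (j + 1)

variable (y : R')

@[simp] lemma gb_zero_right : ∀ m, gb y m 0 = 1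
  | 0 => rfl
  | _ + 1 => rfl

lemma gb_rec1 (m j : ℕ) : gb y (m + 1) (j + 1) = gb y m j + y ^ (j + 1) * gb y m (j + 1) := rfl

lemma gb_eq_zero : ∀ m j, m < j → gb y m j = 0
  | 0, _ + 1, _ => rfl
  | m + 1, j + 1, h => by
    rw [gb_rec1, gb_eq_zero m j (by omega), gb_eq_zero m (j + 1) (by omega)]
    ring

lemma gb_diag : ∀ m, gb y m m = 1
  | 0 => rfl
  | m + 1 => by
    rw [gb_rec1, gb_diag m, gb_eq_zero y m (m + 1) (by omega)]
    ring

lemma poch_succ (n : ℕ) : poch y (n + 1) = poch y n * (1 - y ^ (n + 1)) :=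
  Finset.prod_range_succ _ _

@[simp] lemma poch_zero : poch y 0 = 1 := rfl

lemma poch_mul_gb : ∀ m j, j ≤ m → poch y j * poch y (m - j) * gb y m j = poch y m := by
  intro m
  induction m with
  | zero => intro j hj; interval_cases j; simp [gb]
  | succ m ih =>
    intro j hj
    rcases j with _ | j
    · simp
    · rcases Nat.lt_or_ge j m with hjm | hjm
      · obtain ⟨d, rfl⟩ : ∃ d, m = j + d + 1 := ⟨m - j - 1, by omega⟩
        have e1 := ih j (by omega)
        have e2 := ih (j + 1) (by omega)
        have h1 : j + d + 1 - j = d + 1 := by omega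
        have h2 : j + d + 1 - (j + 1) = d := by omega
        have h3 : j + d + 1 + 1 - (j + 1) = d + 1 := by omega
        rw [h1, poch_succ y d] at e1
        rw [h2, poch_succ y j] at e2
        rw [h3, gb_rec1, poch_succ y (j + d + 1), poch_succ y j, poch_succ y d]
        linear_combination (1 - y ^ (j + 1)) * e1 + y ^ (j + 1) * (1 - y ^ (d + 1)) * e2
      · have hj' : j = m := by omega
        subst hj'
        have h0 : j + 1 - (j + 1) = 0 := by omega
        rw [h0, gb_diag]
        simp

lemma poch_constantCoeff (hy : constantCoeff y = 0) (n : ℕ) :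
    constantCoeff (poch y n) = 1 := by
  simp [poch, map_prod, hy, zero_pow]

lemma poch_ne_zero (hy : constantCoeff y = 0) (n : ℕ) : poch y n ≠ 0 := by
  intro h
  have := poch_constantCoeff y hy n
  rw [h] at this; simp at this

lemma gb_symm (hy : constantCoeff y = 0) (m j : ℕ) (hj : j ≤ m) :
    gb y m j = gb y m (m - j) := by
  have e1 := poch_mul_gb y m j hj
  have e2 := poch_mul_gb y m (m - j) (by omega)
  have h1 : m - (m - j) = j := by omega
  rw [h1] at e2
  have key : poch y j * poch y (m - j) * gb y m j = poch y j * poch y (m - j) * gb y m (m - j) := by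
    rw [e1]; rw [← e2]; ring
  exact mul_left_cancel₀ (mul_ne_zero (poch_ne_zero y hy j) (poch_ne_zero y hy (m - j))) key

lemma gb_rec2 (hy : constantCoeff y = 0) (m j : ℕ) :
    gb y (m + 1) (j + 1) = y ^ (m - j) * gb y m j + gb y m (j + 1) := by
  rcases Nat.lt_or_ge m j with h | h
  · rw [gb_eq_zero y (m + 1) (j + 1) (by omega), gb_eq_zero y m j (by omega),
      gb_eq_zero y m (j + 1) (by omega)]
    ring
  · rcases Nat.eq_or_lt_of_le h with rfl | h2
    · rw [gb_diag, gb_diag, gb_eq_zero y j (j + 1) (by omega)]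
      simp
    · -- j < m
      have hs := gb_symm y hy (m + 1) (j + 1) (by omega)
      rw [show m + 1 - (j + 1) = m - j from by omega] at hs
      obtain ⟨i, hi⟩ : ∃ i, m - j = i + 1 := ⟨m - j - 1, by omega⟩
      rw [hs, hi, gb_rec1]
      have b1 := gb_symm y hy m i (by omega)
      rw [show m - i = j + 1 from by omega] at b1
      have b2 := gb_symm y hy m (i + 1) (by omega)
      rw [show m - (i + 1) = j from by omega] at b2
      rw [← b1, ← b2, ← hi]
      ring

lemma gb_rec4 (hy : constantCoeff y = 0) (n k : ℕ) (hk : k ≤ n) :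
    gb y (2 * n + 2) (n + k + 2) =
      gb y (2 * n) (n + k + 1) + y ^ (n - k) * gb y (2 * n) (n + k)
        + y ^ (n + k + 2) * gb y (2 * n) (n + k + 2)
        + y ^ (2 * n + 1) * gb y (2 * n) (n + k + 1) := by
  have s1 : gb y (2 * n + 2) (n + k + 2)
      = gb y (2 * n + 1) (n + k + 1) + y ^ (n + k + 2) * gb y (2 * n + 1) (n + k + 2) :=
    gb_rec1 y (2 * n + 1) (n + k + 1)
  have a1 := gb_rec2 y hy (2 * n) (n + k)
  rw [show 2 * n - (n + k) = n - k from by omega] at a1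
  have a2 := gb_rec2 y hy (2 * n) (n + k + 1)
  rcases Nat.lt_or_ge k n with hkn | hkn
  · rw [show 2 * n - (n + k + 1) = n - k - 1 from by omega] at a2
    rw [s1, a1, a2]
    have hyy : y ^ (n + k + 2) * y ^ (n - k - 1) = y ^ (2 * n + 1) := by
      rw [← pow_add]; congr 1; omega
    linear_combination gb y (2 * n) (n + k + 1) * hyy
  · have hk' : k = n := by omega
    subst hk'
    rw [s1, a1, gb_eq_zero y (2 * k + 1) (k + k + 2) (by omega),
      gb_eq_zero y (2 * k) (k + k + 1) (by omega), gb_eq_zero y (2 * k) (k + k + 2) (by omega)]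
    ring

lemma gb_center (hy : constantCoeff y = 0) (n : ℕ) :
    gb y (2 * n + 2) (n + 1) =
      gb y (2 * n) n + 2 * y ^ (n + 1) * gb y (2 * n) (n + 1)
        + y ^ (2 * n + 1) * gb y (2 * n) n := by
  rcases n with _ | p
  · show gb y 2 1 = _
    rw [show (2 : ℕ) = 1 + 1 from rfl, gb_rec1, gb_rec1]
    simp [gb]
  · set n := p + 1 with hn
    have s1 : gb y (2 * n + 2) (n + 1)
        = gb y (2 * n + 1) n + y ^ (n + 1) * gb y (2 * n + 1) (n + 1) :=
      gb_rec1 y (2 * n + 1) n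
    have a1 := gb_rec2 y hy (2 * n) p
    rw [show 2 * n - p = n + 1 from by omega] at a1
    rw [show p + 1 = n from rfl] at a1
    have sym := gb_symm y hy (2 * n) p (by omega)
    rw [show 2 * n - p = n + 1 from by omega] at sym
    rw [sym] at a1
    have a2 := gb_rec2 y hy (2 * n) n
    rw [show 2 * n - n = n from by omega] at a2
    rw [s1, a1, a2]
    have hyy : y ^ (n + 1) * y ^ n = y ^ (2 * n + 1) := by
      rw [← pow_add]; congr 1; omega
    linear_combination gb y (2 * n) n * hyy

/-! ### Finite Jacobi triple product -/

def TT : ℕ → ℕ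
  | 0 => 0
  | k + 1 => TT k + (k + 1)

lemma TT_succ (k : ℕ) : TT (k + 1) = TT k + (k + 1) := rfl

lemma TT_pred : ∀ k : ℕ, TT k = TT (k - 1) + k
  | 0 => rfl
  | _ + 1 => rfl

def ea (a b k : ℕ) : ℕ := a * TT k + b * TT (k - 1)
def eb (a b k : ℕ) : ℕ := a * TT (k - 1) + b * TT k

lemma ea_zero (a b : ℕ) : ea a b 0 = 0 := rfl
lemma eb_zero (a b : ℕ) : eb a b 0 = 0 := rfl

lemma ea_succ (a b k : ℕ) : ea a b (k + 1) = ea a b k + (a * (k + 1) + b * k) := by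
  unfold ea
  rw [show k + 1 - 1 = k from rfl, TT_succ, TT_pred k]
  ring

lemma eb_succ (a b k : ℕ) : eb a b (k + 1) = eb a b k + (a * k + b * (k + 1)) := by
  unfold eb
  rw [show k + 1 - 1 = k from rfl, TT_succ, TT_pred k]
  ring

def yy (a b : ℕ) : R' := X ^ (a + b)

def tm (a b : ℕ) : ℕ → R'
  | 0 => 1
  | k + 1 => X ^ ea a b (k + 1) + X ^ eb a b (k + 1)

def Pa (a b n : ℕ) : R' := ∑ k ∈ Finset.range (n + 1), X ^ ea a b k * gb (yy a b) (2 * n) (n + k)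
def Pb (a b n : ℕ) : R' := ∑ k ∈ Finset.range (n + 1), X ^ eb a b k * gb (yy a b) (2 * n) (n + k)
def SS (a b n : ℕ) : R' := ∑ k ∈ Finset.range (n + 1), tm a b k * gb (yy a b) (2 * n) (n + k)
def LL (a b n : ℕ) : R' :=
  ∏ j ∈ Finset.range n, ((1 + X ^ (a * (j + 1) + b * j)) * (1 + X ^ (a * j + b * (j + 1))))

lemma gb_congr (y : R') {m m' j j' : ℕ} (hm : m = m') (hj : j = j') :
    gb y m j = gb y m' j' := by subst hm; subst hj; rfl

lemma yy_constantCoeff (a b : ℕ) (hab : 0 < a + b) : constantCoeff (yy a b) = 0 := by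
  rw [yy, map_pow, constantCoeff_X, zero_pow (by omega)]

lemma sum_shift2 {M : Type*} [AddCommGroup M] (F : ℕ → M) (n : ℕ)
    (h1 : F (n + 1) = 0) (h2 : F (n + 2) = 0) :
    ∑ k ∈ Finset.range (n + 1), F (k + 2) = (∑ k ∈ Finset.range (n + 1), F k) - F 0 - F 1 := by
  have e1 : ∑ k ∈ Finset.range (n + 3), F k = ∑ k ∈ Finset.range (n + 1), F k := by
    rw [Finset.sum_range_succ, Finset.sum_range_succ, h1, h2, add_zero, add_zero]
  have e2 : ∑ k ∈ Finset.range (n + 3), F k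
      = (∑ k ∈ Finset.range (n + 1), F (k + 1 + 1)) + F (0 + 1) + F 0 := by
    rw [Finset.sum_range_succ' F (n + 2), Finset.sum_range_succ' (fun k => F (k + 1)) (n + 1)]
  have e3 : ∑ k ∈ Finset.range (n + 1), F (k + 1 + 1) = ∑ k ∈ Finset.range (n + 1), F (k + 2) :=
    rfl
  rw [e3] at e2
  rw [← e1, e2]
  abel

section FJTP

variable (a b : ℕ)

lemma expA (n k : ℕ) (hk : k ≤ n) :
    X ^ ea a b (k + 1) * (yy a b) ^ (n - k) = X ^ (a * (n + 1) + b * n) * X ^ ea a b k := by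
  obtain ⟨d, rfl⟩ : ∃ d, n = k + d := ⟨n - k, by omega⟩
  rw [show k + d - k = d from by omega, yy, ← pow_mul, ← pow_add, ← pow_add, ea_succ]
  congr 1
  ring

lemma expB (n k : ℕ) (hk : k ≤ n) :
    X ^ eb a b (k + 1) * (yy a b) ^ (n - k) = X ^ (a * n + b * (n + 1)) * X ^ eb a b k := by
  obtain ⟨d, rfl⟩ : ∃ d, n = k + d := ⟨n - k, by omega⟩
  rw [show k + d - k = d from by omega, yy, ← pow_mul, ← pow_add, ← pow_add, eb_succ]
  congr 1
  ring

lemma expA2 (n k : ℕ) :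
    X ^ ea a b (k + 1) * (yy a b) ^ (n + k + 2)
      = X ^ (a * n + b * (n + 1)) * X ^ ea a b (k + 2) := by
  rw [yy, ← pow_mul, ← pow_add, ← pow_add, ea_succ a b (k + 1)]
  congr 1
  ring

lemma expB2 (n k : ℕ) :
    X ^ eb a b (k + 1) * (yy a b) ^ (n + k + 2)
      = X ^ (a * (n + 1) + b * n) * X ^ eb a b (k + 2) := by
  rw [yy, ← pow_mul, ← pow_add, ← pow_add, eb_succ a b (k + 1)]
  congr 1
  ring

lemma expAB (n : ℕ) :
    (X : R') ^ (a * (n + 1) + b * n) * X ^ (a * n + b * (n + 1)) = (yy a b) ^ (2 * n + 1) := by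
  rw [yy, ← pow_mul, ← pow_add]
  congr 1
  ring

lemma expBe1 (n : ℕ) :
    (X : R') ^ (a * n + b * (n + 1)) * X ^ ea a b 1 = (yy a b) ^ (n + 1) := by
  rw [show ea a b 1 = a from by rw [ea_succ, ea_zero]; ring, yy, ← pow_mul, ← pow_add]
  congr 1
  ring

lemma expAe1 (n : ℕ) :
    (X : R') ^ (a * (n + 1) + b * n) * X ^ eb a b 1 = (yy a b) ^ (n + 1) := by
  rw [show eb a b 1 = b from by rw [eb_succ, eb_zero]; ring, yy, ← pow_mul, ← pow_add]
  congr 1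
  ring

lemma SS_eq (n : ℕ) :
    SS a b n = Pa a b n + Pb a b n - gb (yy a b) (2 * n) n := by
  unfold SS Pa Pb
  rw [Finset.sum_range_succ', Finset.sum_range_succ' (fun k => X ^ ea a b k * gb (yy a b) (2 * n) (n + k)),
    Finset.sum_range_succ' (fun k => X ^ eb a b k * gb (yy a b) (2 * n) (n + k))]
  have : ∀ k, tm a b (k + 1) * gb (yy a b) (2 * n) (n + (k + 1))
      = X ^ ea a b (k + 1) * gb (yy a b) (2 * n) (n + (k + 1))
        + X ^ eb a b (k + 1) * gb (yy a b) (2 * n) (n + (k + 1)) := by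
    intro k
    show (X ^ ea a b (k + 1) + X ^ eb a b (k + 1)) * _ = _
    ring
  rw [Finset.sum_congr rfl (fun k _ => this k), Finset.sum_add_distrib]
  show _ + 1 * gb (yy a b) (2 * n) (n + 0) = _
  rw [ea_zero, eb_zero, pow_zero, Nat.add_zero]
  ring

lemma SS_succ (hab : 0 < a + b) (n : ℕ) :
    SS a b (n + 1)
      = SS a b n * ((1 + X ^ (a * (n + 1) + b * n)) * (1 + X ^ (a * n + b * (n + 1)))) := by
  have hy := yy_constantCoeff a b hab
  -- Step A : peel off the k = 0 term of `SS a b (n+1)` and normalize indices.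
  have h1 : SS a b (n + 1) = gb (yy a b) (2 * n + 2) (n + 1)
      + ∑ k ∈ Finset.range (n + 1), tm a b (k + 1) * gb (yy a b) (2 * n + 2) (n + k + 2) := by
    unfold SS
    rw [Finset.sum_range_succ' (fun k => tm a b k * gb (yy a b) (2 * (n + 1)) (n + 1 + k)) (n + 1)]
    have hc : ∀ k ∈ Finset.range (n + 1),
        tm a b (k + 1) * gb (yy a b) (2 * (n + 1)) (n + 1 + (k + 1))
          = tm a b (k + 1) * gb (yy a b) (2 * n + 2) (n + k + 2) := by
      intro k _
      rw [gb_congr (yy a b) (show 2 * (n + 1) = 2 * n + 2 from by ring)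
        (show n + 1 + (k + 1) = n + k + 2 from by ring)]
    rw [Finset.sum_congr rfl hc,
      gb_congr (yy a b) (show 2 * (n + 1) = 2 * n + 2 from by ring)
        (show n + 1 + 0 = n + 1 from by ring)]
    show _ + 1 * _ = _
    ring
  -- Step B : apply the double Pascal recursion under the sum.
  have h2 : ∑ k ∈ Finset.range (n + 1), tm a b (k + 1) * gb (yy a b) (2 * n + 2) (n + k + 2)
      = (∑ k ∈ Finset.range (n + 1), tm a b (k + 1) * gb (yy a b) (2 * n) (n + k + 1))
        + ((∑ k ∈ Finset.range (n + 1),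
              X ^ ea a b (k + 1) * ((yy a b) ^ (n - k) * gb (yy a b) (2 * n) (n + k)))
          + (∑ k ∈ Finset.range (n + 1),
              X ^ eb a b (k + 1) * ((yy a b) ^ (n - k) * gb (yy a b) (2 * n) (n + k))))
        + ((∑ k ∈ Finset.range (n + 1),
              X ^ ea a b (k + 1) * ((yy a b) ^ (n + k + 2) * gb (yy a b) (2 * n) (n + k + 2)))
          + (∑ k ∈ Finset.range (n + 1),
              X ^ eb a b (k + 1) * ((yy a b) ^ (n + k + 2) * gb (yy a b) (2 * n) (n + k + 2))))
        + (∑ k ∈ Finset.range (n + 1),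
            (yy a b) ^ (2 * n + 1) * (tm a b (k + 1) * gb (yy a b) (2 * n) (n + k + 1))) := by
    rw [← Finset.sum_add_distrib, ← Finset.sum_add_distrib, ← Finset.sum_add_distrib,
      ← Finset.sum_add_distrib, ← Finset.sum_add_distrib]
    apply Finset.sum_congr rfl
    intro k hk
    have hk' : k ≤ n := by have := Finset.mem_range.mp hk; omega
    rw [gb_rec4 (yy a b) hy n k hk']
    show (X ^ ea a b (k + 1) + X ^ eb a b (k + 1)) * _
      = (X ^ ea a b (k + 1) + X ^ eb a b (k + 1)) * _ + _ + _
        + (yy a b) ^ (2 * n + 1) * ((X ^ ea a b (k + 1) + X ^ eb a b (k + 1)) * _)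
    ring
  -- the first (and last) partial sums
  have hT1 : ∑ k ∈ Finset.range (n + 1), tm a b (k + 1) * gb (yy a b) (2 * n) (n + k + 1)
      = SS a b n - gb (yy a b) (2 * n) n := by
    rw [Finset.sum_range_succ, gb_eq_zero (yy a b) (2 * n) (n + n + 1) (by omega), mul_zero,
      add_zero]
    unfold SS
    rw [Finset.sum_range_succ' (fun k => tm a b k * gb (yy a b) (2 * n) (n + k)) n]
    have hc : ∀ k ∈ Finset.range n,
        tm a b (k + 1) * gb (yy a b) (2 * n) (n + k + 1)
          = tm a b (k + 1) * gb (yy a b) (2 * n) (n + (k + 1)) := by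
      intro k _
      rw [gb_congr (yy a b) rfl (show n + k + 1 = n + (k + 1) from by ring)]
    rw [Finset.sum_congr rfl hc]
    show _ = _ + 1 * gb (yy a b) (2 * n) (n + 0) - _
    rw [Nat.add_zero]
    ring
  -- the `A`-shift sums
  have hT2a : ∑ k ∈ Finset.range (n + 1),
        X ^ ea a b (k + 1) * ((yy a b) ^ (n - k) * gb (yy a b) (2 * n) (n + k))
      = X ^ (a * (n + 1) + b * n) * Pa a b n := by
    rw [Pa, Finset.mul_sum]
    apply Finset.sum_congr rfl
    intro k hk
    have hk' : k ≤ n := by have := Finset.mem_range.mp hk; omega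
    calc X ^ ea a b (k + 1) * ((yy a b) ^ (n - k) * gb (yy a b) (2 * n) (n + k))
        = (X ^ ea a b (k + 1) * (yy a b) ^ (n - k)) * gb (yy a b) (2 * n) (n + k) := by ring
      _ = (X ^ (a * (n + 1) + b * n) * X ^ ea a b k) * gb (yy a b) (2 * n) (n + k) := by
          rw [expA a b n k hk']
      _ = X ^ (a * (n + 1) + b * n) * (X ^ ea a b k * gb (yy a b) (2 * n) (n + k)) := by ring
  have hT2b : ∑ k ∈ Finset.range (n + 1),
        X ^ eb a b (k + 1) * ((yy a b) ^ (n - k) * gb (yy a b) (2 * n) (n + k))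
      = X ^ (a * n + b * (n + 1)) * Pb a b n := by
    rw [Pb, Finset.mul_sum]
    apply Finset.sum_congr rfl
    intro k hk
    have hk' : k ≤ n := by have := Finset.mem_range.mp hk; omega
    calc X ^ eb a b (k + 1) * ((yy a b) ^ (n - k) * gb (yy a b) (2 * n) (n + k))
        = (X ^ eb a b (k + 1) * (yy a b) ^ (n - k)) * gb (yy a b) (2 * n) (n + k) := by ring
      _ = (X ^ (a * n + b * (n + 1)) * X ^ eb a b k) * gb (yy a b) (2 * n) (n + k) := by
          rw [expB a b n k hk']
      _ = X ^ (a * n + b * (n + 1)) * (X ^ eb a b k * gb (yy a b) (2 * n) (n + k)) := by ring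
  -- the two-step shifted sums
  have hT3a : ∑ k ∈ Finset.range (n + 1),
        X ^ ea a b (k + 1) * ((yy a b) ^ (n + k + 2) * gb (yy a b) (2 * n) (n + k + 2))
      = X ^ (a * n + b * (n + 1)) * Pa a b n
        - X ^ (a * n + b * (n + 1)) * gb (yy a b) (2 * n) n
        - (yy a b) ^ (n + 1) * gb (yy a b) (2 * n) (n + 1) := by
    have hpt : ∀ k ∈ Finset.range (n + 1),
        X ^ ea a b (k + 1) * ((yy a b) ^ (n + k + 2) * gb (yy a b) (2 * n) (n + k + 2))
          = X ^ (a * n + b * (n + 1))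
            * (X ^ ea a b (k + 2) * gb (yy a b) (2 * n) (n + (k + 2))) := by
      intro k _
      rw [gb_congr (yy a b) (rfl : 2 * n = 2 * n) (show n + (k + 2) = n + k + 2 from by ring)]
      calc X ^ ea a b (k + 1) * ((yy a b) ^ (n + k + 2) * gb (yy a b) (2 * n) (n + k + 2))
          = (X ^ ea a b (k + 1) * (yy a b) ^ (n + k + 2)) * gb (yy a b) (2 * n) (n + k + 2) := by
            ring
        _ = (X ^ (a * n + b * (n + 1)) * X ^ ea a b (k + 2)) * gb (yy a b) (2 * n) (n + k + 2) := by
            rw [expA2 a b n k]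
        _ = _ := by ring
    rw [Finset.sum_congr rfl hpt, ← Finset.mul_sum,
      sum_shift2 (fun j => X ^ ea a b j * gb (yy a b) (2 * n) (n + j)) n
        (by show X ^ ea a b (n + 1) * gb (yy a b) (2 * n) (n + (n + 1)) = 0
            rw [gb_eq_zero (yy a b) (2 * n) (n + (n + 1)) (by omega), mul_zero])
        (by show X ^ ea a b (n + 2) * gb (yy a b) (2 * n) (n + (n + 2)) = 0
            rw [gb_eq_zero (yy a b) (2 * n) (n + (n + 2)) (by omega), mul_zero])]
    show X ^ (a * n + b * (n + 1)) * ((∑ k ∈ Finset.range (n + 1),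
        X ^ ea a b k * gb (yy a b) (2 * n) (n + k))
      - X ^ ea a b 0 * gb (yy a b) (2 * n) (n + 0)
      - X ^ ea a b 1 * gb (yy a b) (2 * n) (n + 1)) = _
    rw [ea_zero, pow_zero, gb_congr (yy a b) (show 2 * n = 2 * n from rfl) (Nat.add_zero n),
      ← Pa, one_mul, mul_sub, mul_sub, ← mul_assoc, expBe1 a b n]
  have hT3b : ∑ k ∈ Finset.range (n + 1),
        X ^ eb a b (k + 1) * ((yy a b) ^ (n + k + 2) * gb (yy a b) (2 * n) (n + k + 2))
      = X ^ (a * (n + 1) + b * n) * Pb a b n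
        - X ^ (a * (n + 1) + b * n) * gb (yy a b) (2 * n) n
        - (yy a b) ^ (n + 1) * gb (yy a b) (2 * n) (n + 1) := by
    have hpt : ∀ k ∈ Finset.range (n + 1),
        X ^ eb a b (k + 1) * ((yy a b) ^ (n + k + 2) * gb (yy a b) (2 * n) (n + k + 2))
          = X ^ (a * (n + 1) + b * n)
            * (X ^ eb a b (k + 2) * gb (yy a b) (2 * n) (n + (k + 2))) := by
      intro k _
      rw [gb_congr (yy a b) (rfl : 2 * n = 2 * n) (show n + (k + 2) = n + k + 2 from by ring)]
      calc X ^ eb a b (k + 1) * ((yy a b) ^ (n + k + 2) * gb (yy a b) (2 * n) (n + k + 2))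
          = (X ^ eb a b (k + 1) * (yy a b) ^ (n + k + 2)) * gb (yy a b) (2 * n) (n + k + 2) := by
            ring
        _ = (X ^ (a * (n + 1) + b * n) * X ^ eb a b (k + 2)) * gb (yy a b) (2 * n) (n + k + 2) := by
            rw [expB2 a b n k]
        _ = _ := by ring
    rw [Finset.sum_congr rfl hpt, ← Finset.mul_sum,
      sum_shift2 (fun j => X ^ eb a b j * gb (yy a b) (2 * n) (n + j)) n
        (by show X ^ eb a b (n + 1) * gb (yy a b) (2 * n) (n + (n + 1)) = 0
            rw [gb_eq_zero (yy a b) (2 * n) (n + (n + 1)) (by omega), mul_zero])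
        (by show X ^ eb a b (n + 2) * gb (yy a b) (2 * n) (n + (n + 2)) = 0
            rw [gb_eq_zero (yy a b) (2 * n) (n + (n + 2)) (by omega), mul_zero])]
    show X ^ (a * (n + 1) + b * n) * ((∑ k ∈ Finset.range (n + 1),
        X ^ eb a b k * gb (yy a b) (2 * n) (n + k))
      - X ^ eb a b 0 * gb (yy a b) (2 * n) (n + 0)
      - X ^ eb a b 1 * gb (yy a b) (2 * n) (n + 1)) = _
    rw [eb_zero, pow_zero, gb_congr (yy a b) (show 2 * n = 2 * n from rfl) (Nat.add_zero n),
      ← Pb, one_mul, mul_sub, mul_sub, ← mul_assoc, expAe1 a b n]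
  have hT4 : ∑ k ∈ Finset.range (n + 1),
        (yy a b) ^ (2 * n + 1) * (tm a b (k + 1) * gb (yy a b) (2 * n) (n + k + 1))
      = (yy a b) ^ (2 * n + 1) * (SS a b n - gb (yy a b) (2 * n) n) := by
    rw [← Finset.mul_sum, hT1]
  have hC0 := gb_center (yy a b) hy n
  rw [h1, h2, hT1, hT2a, hT2b, hT3a, hT3b, hT4, hC0]
  linear_combination (-(X ^ (a * (n + 1) + b * n) + X ^ (a * n + b * (n + 1)))) * SS_eq a b n
    - SS a b n * expAB a b n

theorem jtp (hab : 0 < a + b) (n : ℕ) : LL a b n = SS a b n := by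
  induction n with
  | zero =>
    show (1 : R') = _
    unfold SS
    rw [Finset.sum_range_one]
    show (1 : R') = 1 * gb (yy a b) 0 (0 + 0)
    rw [Nat.add_zero]
    show (1 : R') = 1 * 1
    ring
  | succ n ih =>
    rw [show LL a b (n + 1) = LL a b n
        * ((1 + X ^ (a * (n + 1) + b * n)) * (1 + X ^ (a * n + b * (n + 1)))) from
      Finset.prod_range_succ _ n, ih, SS_succ a b hab n]

end FJTP

/-! ### Limits of partial products, and coefficient stabilization -/

lemma coeff_eq_of_dvd {A B : R'} (N : ℕ) (h : (X : R') ^ (N + 1) ∣ A - B) :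
    coeff N A = coeff N B := by
  rw [X_pow_dvd_iff] at h
  have := h N (by omega)
  rw [map_sub] at this
  omega

lemma dvd_mul_compat {A B C D : R'} (m : ℕ) (h1 : (X : R') ^ m ∣ A - B)
    (h2 : (X : R') ^ m ∣ C - D) : (X : R') ^ m ∣ A * C - B * D := by
  have : A * C - B * D = A * (C - D) + D * (A - B) := by ring
  rw [this]
  exact dvd_add (Dvd.dvd.mul_left h2 A) (Dvd.dvd.mul_left h1 D)

lemma prod_sub_one_dvd (m : ℕ) (s : Finset ℕ) (F : ℕ → R')
    (h : ∀ i ∈ s, (X : R') ^ m ∣ F i - 1) :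
    (X : R') ^ m ∣ (∏ i ∈ s, F i) - 1 := by
  classical
  induction s using Finset.induction_on with
  | empty => simp
  | @insert x s' hx ih =>
    rw [Finset.prod_insert hx]
    have hFx := h x (Finset.mem_insert_self x s')
    have hP := ih (fun i hi => h i (Finset.mem_insert_of_mem hi))
    have : F x * ∏ i ∈ s', F i - 1
        = F x * ((∏ i ∈ s', F i) - 1) + (F x - 1) := by ring
    rw [this]
    exact dvd_add (Dvd.dvd.mul_left hP (F x)) hFx

lemma prod_range_stab (N n1 n2 : ℕ) (h12 : n1 ≤ n2) (F : ℕ → R')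
    (hF : ∀ i, n1 ≤ i → (X : R') ^ (N + 1) ∣ F i - 1) :
    (X : R') ^ (N + 1) ∣ (∏ i ∈ Finset.range n2, F i) - (∏ i ∈ Finset.range n1, F i) := by
  rw [← Finset.prod_range_mul_prod_Ico F h12]
  have : (∏ i ∈ Finset.range n1, F i) * (∏ i ∈ Finset.Ico n1 n2, F i)
        - (∏ i ∈ Finset.range n1, F i)
      = (∏ i ∈ Finset.range n1, F i) * ((∏ i ∈ Finset.Ico n1 n2, F i) - 1) := by ring
  rw [this]
  exact Dvd.dvd.mul_left
    (prod_sub_one_dvd (N + 1) _ F (fun i hi => hF i (Finset.mem_Ico.mp hi).1)) _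

/-- partial products of `f r` -/
def fP (r n : ℕ) : R' := ∏ i ∈ Finset.range n, (1 - X ^ (r * (i + 1)))
/-- partial products of `∏ (1 + q^{r(2i+1)})` -/
def gP (r n : ℕ) : R' := ∏ i ∈ Finset.range n, (1 + X ^ (r * (2 * i + 1)))
/-- partial products of `∏ (1 - q^{r(2i+1)})` -/
def eP (r n : ℕ) : R' := ∏ i ∈ Finset.range n, (1 - X ^ (r * (2 * i + 1)))

def fL (r : ℕ) : R' := mk fun N => coeff N (fP r (N + 1))
def gL (r : ℕ) : R' := mk fun N => coeff N (gP r (N + 1))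
def eL (r : ℕ) : R' := mk fun N => coeff N (eP r (N + 1))

lemma factor_dvd_sub (N c : ℕ) (hc : N + 1 ≤ c) (u : R') :
    (X : R') ^ (N + 1) ∣ (1 + u * X ^ c) - 1 := by
  have : (1 + u * X ^ c) - 1 = u * X ^ (c - (N + 1)) * X ^ (N + 1) := by
    rw [mul_assoc, ← pow_add]
    rw [show c - (N + 1) + (N + 1) = c from by omega]
    ring
  rw [this]
  exact Dvd.intro_left _ rfl

lemma fP_stab (r : ℕ) (hr : 0 < r) (N n1 n2 : ℕ) (hn : N + 1 ≤ n1) (h12 : n1 ≤ n2) :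
    (X : R') ^ (N + 1) ∣ fP r n2 - fP r n1 := by
  apply prod_range_stab N n1 n2 h12
  intro i hi
  rw [show (1 : R') - X ^ (r * (i + 1)) = 1 + (-1 : R') * X ^ (r * (i + 1)) from by ring]
  exact factor_dvd_sub N _ (by nlinarith) _

lemma gP_stab (r : ℕ) (hr : 0 < r) (N n1 n2 : ℕ) (hn : N + 1 ≤ n1) (h12 : n1 ≤ n2) :
    (X : R') ^ (N + 1) ∣ gP r n2 - gP r n1 := by
  apply prod_range_stab N n1 n2 h12
  intro i hi
  rw [show (1 : R') + X ^ (r * (2 * i + 1)) = 1 + (1 : R') * X ^ (r * (2 * i + 1)) from by ring]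
  exact factor_dvd_sub N _ (by nlinarith) _

lemma eP_stab (r : ℕ) (hr : 0 < r) (N n1 n2 : ℕ) (hn : N + 1 ≤ n1) (h12 : n1 ≤ n2) :
    (X : R') ^ (N + 1) ∣ eP r n2 - eP r n1 := by
  apply prod_range_stab N n1 n2 h12
  intro i hi
  rw [show (1 : R') - X ^ (r * (2 * i + 1)) = 1 + (-1 : R') * X ^ (r * (2 * i + 1)) from by ring]
  exact factor_dvd_sub N _ (by nlinarith) _

lemma fL_dvd (r : ℕ) (hr : 0 < r) (N n : ℕ) (hn : N + 1 ≤ n) :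
    (X : R') ^ (N + 1) ∣ fL r - fP r n := by
  rw [X_pow_dvd_iff]
  intro m hm
  rw [map_sub, fL, coeff_mk]
  have h1 : coeff m (fP r n) = coeff m (fP r (m + 1)) :=
    coeff_eq_of_dvd m (fP_stab r hr m (m + 1) n (by omega) (by omega))
  omega

lemma gL_dvd (r : ℕ) (hr : 0 < r) (N n : ℕ) (hn : N + 1 ≤ n) :
    (X : R') ^ (N + 1) ∣ gL r - gP r n := by
  rw [X_pow_dvd_iff]
  intro m hm
  rw [map_sub, gL, coeff_mk]
  have h1 : coeff m (gP r n) = coeff m (gP r (m + 1)) :=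
    coeff_eq_of_dvd m (gP_stab r hr m (m + 1) n (by omega) (by omega))
  omega

lemma eL_dvd (r : ℕ) (hr : 0 < r) (N n : ℕ) (hn : N + 1 ≤ n) :
    (X : R') ^ (N + 1) ∣ eL r - eP r n := by
  rw [X_pow_dvd_iff]
  intro m hm
  rw [map_sub, eL, coeff_mk]
  have h1 : coeff m (eP r n) = coeff m (eP r (m + 1)) :=
    coeff_eq_of_dvd m (eP_stab r hr m (m + 1) n (by omega) (by omega))
  omega

/-! ### finite product splittings -/

lemma prod_range_double {M : Type*} [CommMonoid M] (F : ℕ → M) :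
    ∀ n, ∏ i ∈ Finset.range (2 * n), F i = ∏ j ∈ Finset.range n, (F (2 * j) * F (2 * j + 1))
  | 0 => by simp
  | n + 1 => by
    rw [show 2 * (n + 1) = 2 * n + 1 + 1 from by ring, Finset.prod_range_succ,
      Finset.prod_range_succ, Finset.prod_range_succ, prod_range_double F n]
    rw [mul_assoc]

lemma fP_split (r n : ℕ) : fP r (2 * n) = eP r n * fP (2 * r) n := by
  rw [fP, prod_range_double (fun i => 1 - X ^ (r * (i + 1))) n, Finset.prod_mul_distrib]
  congr 1
  apply Finset.prod_congr rfl
  intro j _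
  rw [show r * (2 * j + 1 + 1) = 2 * r * (j + 1) from by ring]

lemma geP_split (r n : ℕ) : gP r n * eP r n = eP (2 * r) n := by
  rw [gP, eP, eP, ← Finset.prod_mul_distrib]
  apply Finset.prod_congr rfl
  intro i _
  rw [show ((1 : R') + X ^ (r * (2 * i + 1))) * (1 - X ^ (r * (2 * i + 1)))
      = 1 - X ^ (r * (2 * i + 1)) * X ^ (r * (2 * i + 1)) from by ring,
    ← pow_add, show r * (2 * i + 1) + r * (2 * i + 1) = 2 * r * (2 * i + 1) from by ring]

lemma LL_rr (r n : ℕ) : LL r r n = gP r n * gP r n := by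
  rw [LL, gP, ← Finset.prod_mul_distrib]
  apply Finset.prod_congr rfl
  intro j _
  rw [show r * (j + 1) + r * j = r * (2 * j + 1) from by ring,
    show r * j + r * (j + 1) = r * (2 * j + 1) from by ring]

lemma LL_r3r (r n : ℕ) : LL r (3 * r) n = gP r (2 * n) := by
  rw [gP, prod_range_double (fun i => 1 + X ^ (r * (2 * i + 1))) n, LL]
  apply Finset.prod_congr rfl
  intro j _
  rw [show r * (j + 1) + 3 * r * j = r * (2 * (2 * j) + 1) from by ring,
    show r * j + 3 * r * (j + 1) = r * (2 * (2 * j + 1) + 1) from by ring]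

lemma poch_eq_fP (a b n : ℕ) : poch (yy a b) n = fP (a + b) n := by
  rw [poch, fP]
  apply Finset.prod_congr rfl
  intro i _
  rw [yy, ← pow_mul]

/-! ### the tail-product form of `poch * gb` -/

def RP (y : R') (n k : ℕ) : R' :=
  (∏ i ∈ Finset.Ico (n - k) n, (1 - y ^ (i + 1)))
    * (∏ i ∈ Finset.Ico (n + k) (2 * n), (1 - y ^ (i + 1)))

lemma poch_gb (y : R') (hy : constantCoeff y = 0) (n k : ℕ) (hk : k ≤ n) :
    poch y n * gb y (2 * n) (n + k) = RP y n k := by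
  have h1 := poch_mul_gb y (2 * n) (n + k) (by omega)
  rw [show 2 * n - (n + k) = n - k from by omega] at h1
  have e1 : poch y (n - k) * (∏ i ∈ Finset.Ico (n - k) n, (1 - y ^ (i + 1))) = poch y n := by
    simp only [poch, Finset.range_eq_Ico]
    exact Finset.prod_Ico_consecutive _ (by omega) (by omega)
  have e2 : poch y (n + k) * (∏ i ∈ Finset.Ico (n + k) (2 * n), (1 - y ^ (i + 1)))
      = poch y (2 * n) := by
    simp only [poch, Finset.range_eq_Ico]
    exact Finset.prod_Ico_consecutive _ (by omega) (by omega)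
  have key : (poch y (n - k) * poch y (n + k)) * (poch y n * gb y (2 * n) (n + k))
      = (poch y (n - k) * poch y (n + k)) * RP y n k := by
    calc (poch y (n - k) * poch y (n + k)) * (poch y n * gb y (2 * n) (n + k))
        = poch y n * (poch y (n + k) * poch y (n - k) * gb y (2 * n) (n + k)) := by ring
      _ = poch y n * poch y (2 * n) := by rw [h1]
      _ = (poch y (n - k) * (∏ i ∈ Finset.Ico (n - k) n, (1 - y ^ (i + 1))))
            * (poch y (n + k) * (∏ i ∈ Finset.Ico (n + k) (2 * n), (1 - y ^ (i + 1)))) := by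
          rw [e1, e2]
      _ = (poch y (n - k) * poch y (n + k)) * RP y n k := by rw [RP]; ring
  exact mul_left_cancel₀ (mul_ne_zero (poch_ne_zero y hy _) (poch_ne_zero y hy _)) key

lemma RP_dvd (a b : ℕ) (hab : 0 < a + b) (N n k : ℕ) (h : N + 1 ≤ n - k) :
    (X : R') ^ (N + 1) ∣ RP (yy a b) n k - 1 := by
  have hfac : ∀ i : ℕ, n - k ≤ i → (X : R') ^ (N + 1) ∣ (1 - (yy a b) ^ (i + 1)) - 1 := by
    intro i hi
    rw [show (1 : R') - (yy a b) ^ (i + 1) = 1 + (-1 : R') * X ^ ((a + b) * (i + 1)) from by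
      rw [yy, ← pow_mul]; ring]
    exact factor_dvd_sub N _ (by nlinarith) _
  have h1 : (X : R') ^ (N + 1) ∣ (∏ i ∈ Finset.Ico (n - k) n, (1 - (yy a b) ^ (i + 1))) - 1 :=
    prod_sub_one_dvd (N + 1) _ _ (fun i hi => hfac i (Finset.mem_Ico.mp hi).1)
  have h2 : (X : R') ^ (N + 1)
      ∣ (∏ i ∈ Finset.Ico (n + k) (2 * n), (1 - (yy a b) ^ (i + 1))) - 1 :=
    prod_sub_one_dvd (N + 1) _ _ (fun i hi => hfac i (by
      have := (Finset.mem_Ico.mp hi).1; omega))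
  rw [RP, show (∏ i ∈ Finset.Ico (n - k) n, (1 - (yy a b) ^ (i + 1)))
      * (∏ i ∈ Finset.Ico (n + k) (2 * n), (1 - (yy a b) ^ (i + 1))) - 1
    = (∏ i ∈ Finset.Ico (n - k) n, (1 - (yy a b) ^ (i + 1)))
        * ((∏ i ∈ Finset.Ico (n + k) (2 * n), (1 - (yy a b) ^ (i + 1))) - 1)
      + ((∏ i ∈ Finset.Ico (n - k) n, (1 - (yy a b) ^ (i + 1))) - 1) from by ring]
  exact dvd_add (Dvd.dvd.mul_left h2 _) h1

/-! ### arithmetic lemmas about triangular numbers -/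

lemma TT_ge : ∀ k, k ≤ TT k
  | 0 => le_refl 0
  | k + 1 => by rw [TT_succ]; have := TT_ge k; omega

lemma two_TT : ∀ k, 2 * TT k = k * (k + 1)
  | 0 => rfl
  | k + 1 => by
    rw [TT_succ, Nat.mul_add, two_TT k]
    ring

lemma TT_sq (k : ℕ) : TT (k + 1) + TT k = (k + 1) * (k + 1) := by
  apply Nat.eq_of_mul_eq_mul_left (show 0 < 2 by norm_num)
  rw [Nat.mul_add, two_TT, two_TT]
  ring

lemma TT_strict : ∀ m1 m2 : ℕ, m1 < m2 → TT m1 < TT m2 := by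
  intro m1 m2
  induction m2 with
  | zero => omega
  | succ k ih =>
    intro h
    rw [TT_succ]
    rcases Nat.lt_or_ge m1 k with h2 | h2
    · have := ih h2; omega
    · have : m1 = k := by omega
      subst this; omega

lemma TT_inj {m1 m2 : ℕ} (h : TT m1 = TT m2) : m1 = m2 := by
  rcases Nat.lt_trichotomy m1 m2 with h1 | h1 | h1
  · have := TT_strict m1 m2 h1; omega
  · exact h1
  · have := TT_strict m2 m1 h1; omega

lemma ea_rr (r k : ℕ) : ea r r k = r * (k * k) := by
  rcases k with _ | k
  · rfl
  · show r * TT (k + 1) + r * TT (k + 1 - 1) = _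
    rw [show k + 1 - 1 = k from rfl, ← Nat.mul_add, TT_sq]

lemma eb_rr (r k : ℕ) : eb r r k = r * (k * k) := by
  rcases k with _ | k
  · rfl
  · show r * TT (k + 1 - 1) + r * TT (k + 1) = _
    rw [show k + 1 - 1 = k from rfl, ← Nat.mul_add]
    rw [show TT k + TT (k + 1) = TT (k + 1) + TT k from by ring, TT_sq]

lemma ea_r3 (r k : ℕ) : ea r (3 * r) (k + 1) = r * TT (2 * k + 1) := by
  show r * TT (k + 1) + 3 * r * TT (k + 1 - 1) = _
  rw [show k + 1 - 1 = k from rfl]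
  apply Nat.eq_of_mul_eq_mul_left (show 0 < 2 by norm_num)
  rw [Nat.mul_add, show 2 * (r * TT (k+1)) = r * (2 * TT (k+1)) from by ring,
    show 2 * (3 * r * TT k) = 3 * r * (2 * TT k) from by ring,
    show 2 * (r * TT (2*k+1)) = r * (2 * TT (2*k+1)) from by ring,
    two_TT, two_TT, two_TT]
  ring

lemma eb_r3 (r k : ℕ) : eb r (3 * r) (k + 1) = r * TT (2 * k + 2) := by
  show r * TT (k + 1 - 1) + 3 * r * TT (k + 1) = _
  rw [show k + 1 - 1 = k from rfl]
  apply Nat.eq_of_mul_eq_mul_left (show 0 < 2 by norm_num)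
  rw [Nat.mul_add, show 2 * (r * TT k) = r * (2 * TT k) from by ring,
    show 2 * (3 * r * TT (k+1)) = 3 * r * (2 * TT (k+1)) from by ring,
    show 2 * (r * TT (2*k+2)) = r * (2 * TT (2*k+2)) from by ring,
    two_TT, two_TT, two_TT]
  ring

lemma ea_ge (a b k : ℕ) (ha : 0 < a) : k ≤ ea a b k := by
  have h1 := TT_ge k
  have : TT k ≤ a * TT k := Nat.le_mul_of_pos_left _ ha
  unfold ea
  omega

lemma eb_ge (a b k : ℕ) (hb : 0 < b) : k ≤ eb a b k := by
  have h1 := TT_ge k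
  have : TT k ≤ b * TT k := Nat.le_mul_of_pos_left _ hb
  unfold eb
  omega

/-! ### theta series -/

open Classical in
def thA (r : ℕ) : R' := mk fun N =>
  if N = 0 then 1 else if ∃ k : ℕ, 0 < k ∧ r * (k * k) = N then 2 else 0

open Classical in
def thB (r : ℕ) : R' := mk fun N => if ∃ m : ℕ, r * TT m = N then 1 else 0

/-! ### coefficient extraction -/

lemma coeff_zero_of_X_dvd {A : R'} (N : ℕ) (h : (X : R') ^ (N + 1) ∣ A) :
    coeff N A = 0 := X_pow_dvd_iff.mp h N (by omega)

lemma tm_X_dvd (a b : ℕ) (ha : 0 < a) (hb : 0 < b) (N k : ℕ) (hk : N + 1 ≤ k) :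
    (X : R') ^ (N + 1) ∣ tm a b k := by
  rcases k with _ | k
  · omega
  · show (X : R') ^ (N + 1) ∣ X ^ ea a b (k + 1) + X ^ eb a b (k + 1)
    exact dvd_add (pow_dvd_pow X (le_trans hk (ea_ge a b (k + 1) ha)))
      (pow_dvd_pow X (le_trans hk (eb_ge a b (k + 1) hb)))

lemma coeff_poch_SS (a b : ℕ) (ha : 0 < a) (hb : 0 < b) (N : ℕ) :
    coeff N (poch (yy a b) (2 * N + 2) * SS a b (2 * N + 2))
      = ∑ k ∈ Finset.range (2 * N + 2 + 1), coeff N (tm a b k) := by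
  rw [SS, Finset.mul_sum, map_sum]
  apply Finset.sum_congr rfl
  intro k hk
  have hk' : k ≤ 2 * N + 2 := by have := Finset.mem_range.mp hk; omega
  rw [show poch (yy a b) (2 * N + 2) * (tm a b k * gb (yy a b) (2 * (2 * N + 2)) (2 * N + 2 + k))
      = tm a b k * (poch (yy a b) (2 * N + 2) * gb (yy a b) (2 * (2 * N + 2)) (2 * N + 2 + k))
      from by ring,
    poch_gb (yy a b) (yy_constantCoeff a b (by omega)) (2 * N + 2) k hk']
  rcases le_or_gt k N with hkN | hkN
  · have hd := RP_dvd a b (by omega) N (2 * N + 2) k (by omega)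
    have hdd : (X : R') ^ (N + 1)
        ∣ tm a b k * RP (yy a b) (2 * N + 2) k - tm a b k := by
      rw [show tm a b k * RP (yy a b) (2 * N + 2) k - tm a b k
          = tm a b k * (RP (yy a b) (2 * N + 2) k - 1) from by ring]
      exact Dvd.dvd.mul_left hd _
    exact coeff_eq_of_dvd N hdd
  · have h1 : coeff N (tm a b k) = 0 :=
      coeff_zero_of_X_dvd N (tm_X_dvd a b ha hb N k (by omega))
    have h2 : coeff N (tm a b k * RP (yy a b) (2 * N + 2) k) = 0 :=
      coeff_zero_of_X_dvd N (Dvd.dvd.mul_right (tm_X_dvd a b ha hb N k (by omega)) _)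
    rw [h1, h2]

theorem E1 (r : ℕ) (hr : 0 < r) : fL (2 * r) * (gL r * gL r) = thA r := by
  ext N
  have hfd := fL_dvd (2 * r) (by omega) N (2 * N + 2) (by omega)
  have hgd := gL_dvd r hr N (2 * N + 2) (by omega)
  have hd : (X : R') ^ (N + 1) ∣ fL (2 * r) * (gL r * gL r)
      - fP (2 * r) (2 * N + 2) * (gP r (2 * N + 2) * gP r (2 * N + 2)) :=
    dvd_mul_compat _ hfd (dvd_mul_compat _ hgd hgd)
  rw [coeff_eq_of_dvd N hd]
  have h1 : fP (2 * r) (2 * N + 2) * (gP r (2 * N + 2) * gP r (2 * N + 2))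
      = poch (yy r r) (2 * N + 2) * SS r r (2 * N + 2) := by
    rw [poch_eq_fP, show r + r = 2 * r from by ring, ← jtp r r (by omega) (2 * N + 2), LL_rr]
  rw [h1, coeff_poch_SS r r hr hr N]
  -- number theory
  rw [thA, coeff_mk, Finset.sum_range_succ']
  have htm0 : coeff N (tm r r 0) = if N = 0 then 1 else 0 := by
    show coeff N (1 : R') = _
    rw [coeff_one]
  have htms : ∀ k, coeff N (tm r r (k + 1))
      = if r * ((k + 1) * (k + 1)) = N then 2 else 0 := by
    intro k
    show coeff N (X ^ ea r r (k + 1) + X ^ eb r r (k + 1)) = _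
    rw [map_add, ea_rr, eb_rr, coeff_X_pow]
    split_ifs <;> omega
  rw [Finset.sum_congr rfl (fun k _ => htms k), htm0]
  by_cases hN : N = 0
  · subst hN
    have hz : ∀ k ∈ Finset.range (2 * 0 + 2),
        (if r * ((k + 1) * (k + 1)) = 0 then (2 : ℤ) else 0) = 0 := by
      intro k _
      have : 0 < r * ((k + 1) * (k + 1)) := Nat.mul_pos hr (Nat.mul_pos (by omega) (by omega))
      rw [if_neg (by omega)]
    rw [Finset.sum_eq_zero hz, if_pos rfl, if_pos rfl, zero_add]
  · rw [if_neg hN, if_neg hN, add_zero]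
    by_cases hex : ∃ k : ℕ, 0 < k ∧ r * (k * k) = N
    · rw [if_pos hex]
      obtain ⟨k0, hk0, hk0e⟩ := hex
      have hk0N : k0 ≤ N := by nlinarith
      rw [Finset.sum_eq_single_of_mem (k0 - 1) (Finset.mem_range.mpr (by omega))
        (fun c _ hc => by
          rw [if_neg]
          intro hce
          have h2 : (c + 1) * (c + 1) = k0 * k0 := by
            apply Nat.eq_of_mul_eq_mul_left hr
            omega
          have : c + 1 = k0 := by nlinarith
          omega)]
      rw [show k0 - 1 + 1 = k0 from by omega, if_pos hk0e]
    · rw [if_neg hex, Finset.sum_eq_zero]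
      intro k _
      rw [if_neg]
      intro hke
      exact hex ⟨k + 1, by omega, hke⟩

theorem E2 (r : ℕ) (hr : 0 < r) : fL (4 * r) * gL r = thB r := by
  ext N
  have hfd := fL_dvd (4 * r) (by omega) N (2 * N + 2) (by omega)
  have hgd := gL_dvd r hr N (2 * (2 * N + 2)) (by omega)
  have hd : (X : R') ^ (N + 1) ∣ fL (4 * r) * gL r
      - fP (4 * r) (2 * N + 2) * gP r (2 * (2 * N + 2)) :=
    dvd_mul_compat _ hfd hgd
  rw [coeff_eq_of_dvd N hd]
  have h1 : fP (4 * r) (2 * N + 2) * gP r (2 * (2 * N + 2))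
      = poch (yy r (3 * r)) (2 * N + 2) * SS r (3 * r) (2 * N + 2) := by
    rw [poch_eq_fP, show r + 3 * r = 4 * r from by ring,
      ← jtp r (3 * r) (by omega) (2 * N + 2), LL_r3r]
  rw [h1, coeff_poch_SS r (3 * r) hr (by omega) N]
  -- number theory
  rw [thB, coeff_mk, Finset.sum_range_succ']
  have htm0 : coeff N (tm r (3 * r) 0) = if N = 0 then 1 else 0 := by
    show coeff N (1 : R') = _
    rw [coeff_one]
  have htms : ∀ k, coeff N (tm r (3 * r) (k + 1))
      = (if r * TT (2 * k + 1) = N then 1 else 0)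
        + (if r * TT (2 * k + 2) = N then 1 else 0) := by
    intro k
    show coeff N (X ^ ea r (3 * r) (k + 1) + X ^ eb r (3 * r) (k + 1)) = _
    rw [map_add, ea_r3, eb_r3, coeff_X_pow, coeff_X_pow]
    split_ifs <;> omega
  rw [Finset.sum_congr rfl (fun k _ => htms k), htm0]
  have hTTz : ∀ m : ℕ, 0 < m → 0 < r * TT m := by
    intro m hm
    have := TT_ge m
    exact Nat.mul_pos hr (by omega)
  by_cases hN : N = 0
  · subst hN
    have hz : ∀ k ∈ Finset.range (2 * 0 + 2),
        ((if r * TT (2 * k + 1) = 0 then (1 : ℤ) else 0)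
          + if r * TT (2 * k + 2) = 0 then (1 : ℤ) else 0) = 0 := by
      intro k _
      have h1 := hTTz (2 * k + 1) (by omega)
      have h2 := hTTz (2 * k + 2) (by omega)
      rw [if_neg (by omega), if_neg (by omega), add_zero]
    rw [Finset.sum_eq_zero hz, if_pos (show ∃ m, r * TT m = 0 from ⟨0, by simp [TT]⟩),
      zero_add, if_pos rfl]
  · rw [if_neg hN, add_zero]
    -- uniqueness helper
    have huniq : ∀ m1 m2 : ℕ, r * TT m1 = N → r * TT m2 = N → m1 = m2 := by
      intro m1 m2 h1 h2
      exact TT_inj (Nat.eq_of_mul_eq_mul_left hr (by omega))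
    by_cases hex : ∃ m : ℕ, r * TT m = N
    · rw [if_pos hex]
      obtain ⟨m0, hm0⟩ := hex
      have hm0pos : 0 < m0 := by
        rcases Nat.eq_zero_or_pos m0 with h | h
        · subst h; simp [TT] at hm0; omega
        · exact h
      have hm0N : m0 ≤ N := by
        have h1 := TT_ge m0
        nlinarith
      rcases Nat.even_or_odd m0 with ⟨k0, hk0⟩ | ⟨k0, hk0⟩
      · -- m0 even, m0 = 2*(k0-1)+2 with k0 ≥ 1
        have hk0pos : 0 < k0 := by omega
        rw [Finset.sum_eq_single_of_mem (k0 - 1) (Finset.mem_range.mpr (by omega))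
          (fun c _ hc => by
            have e1 : r * TT (2 * c + 1) ≠ N := fun h => by
              have := huniq _ _ h hm0; omega
            have e2 : r * TT (2 * c + 2) ≠ N := fun h => by
              have := huniq _ _ h hm0; omega
            rw [if_neg e1, if_neg e2, add_zero])]
        have e1 : r * TT (2 * (k0 - 1) + 1) ≠ N := fun h => by
          have := huniq _ _ h hm0; omega
        have e2 : r * TT (2 * (k0 - 1) + 2) = N := by
          rw [show 2 * (k0 - 1) + 2 = m0 from by omega]; exact hm0
        rw [if_neg e1, if_pos e2, zero_add]
      · -- m0 = 2*k0+1
        rw [Finset.sum_eq_single_of_mem k0 (Finset.mem_range.mpr (by omega))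
          (fun c _ hc => by
            have e1 : r * TT (2 * c + 1) ≠ N := fun h => by
              have := huniq _ _ h hm0; omega
            have e2 : r * TT (2 * c + 2) ≠ N := fun h => by
              have := huniq _ _ h hm0; omega
            rw [if_neg e1, if_neg e2, add_zero])]
        have e1 : r * TT (2 * k0 + 1) = N := by
          rw [show 2 * k0 + 1 = m0 from by omega]; exact hm0
        have e2 : r * TT (2 * k0 + 2) ≠ N := fun h => by
          have := huniq _ _ h hm0; omega
        rw [if_pos e1, if_neg e2, add_zero]
    · rw [if_neg hex, Finset.sum_eq_zero]
      intro k _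
      rw [if_neg (fun h => hex ⟨2 * k + 1, h⟩), if_neg (fun h => hex ⟨2 * k + 2, h⟩), add_zero]

theorem E3 (r : ℕ) (hr : 0 < r) : gL r * eL r = eL (2 * r) := by
  ext N
  have hd : (X : R') ^ (N + 1) ∣ gL r * eL r - gP r (N + 1) * eP r (N + 1) :=
    dvd_mul_compat _ (gL_dvd r hr N (N + 1) (by omega)) (eL_dvd r hr N (N + 1) (by omega))
  rw [coeff_eq_of_dvd N hd, geP_split r (N + 1)]
  exact (coeff_eq_of_dvd N (eL_dvd (2 * r) (by omega) N (N + 1) (by omega))).symm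

theorem E4 (r : ℕ) (hr : 0 < r) : fL r = eL r * fL (2 * r) := by
  ext N
  rw [coeff_eq_of_dvd N (fL_dvd r hr N (2 * (N + 1)) (by omega)), fP_split r (N + 1)]
  exact (coeff_eq_of_dvd N (dvd_mul_compat _ (eL_dvd r hr N (N + 1) (by omega))
    (fL_dvd (2 * r) (by omega) N (N + 1) (by omega)))).symm

theorem E5 : thA 1 = thA 4 + 2 * X * thB 8 := by
  ext N
  rw [map_add, thA, thA, coeff_mk, coeff_mk,
    show (2 : R') * X * thB 8 = X * thB 8 + X * thB 8 from by ring, map_add]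
  cases N with
  | zero =>
    have h0 : coeff 0 (X * thB 8) = 0 := by
      rw [coeff_zero_eq_constantCoeff_apply, map_mul, constantCoeff_X, zero_mul]
    rw [if_pos rfl, if_pos rfl, h0]
    ring
  | succ M =>
    rw [if_neg (show ¬(M + 1 = 0) from by omega), if_neg (show ¬(M + 1 = 0) from by omega),
      coeff_succ_X_mul, thB, coeff_mk]
    by_cases h4 : ∃ k : ℕ, 0 < k ∧ 4 * (k * k) = M + 1
    · rw [if_pos h4]
      obtain ⟨k, hk, hke⟩ := h4
      have hsq : 2 * k * (2 * k) = 4 * (k * k) := by ring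
      have h1 : ∃ k : ℕ, 0 < k ∧ 1 * (k * k) = M + 1 := ⟨2 * k, by omega, by omega⟩
      have h8 : ¬∃ m : ℕ, 8 * TT m = M := by
        rintro ⟨m, hm⟩
        omega
      rw [if_pos h1, if_neg h8]
      ring
    · by_cases h8 : ∃ m : ℕ, 8 * TT m = M
      · rw [if_neg h4, if_pos h8]
        obtain ⟨m, hm⟩ := h8
        have hexp : (2 * m + 1) * (2 * m + 1) = 4 * (m * (m + 1)) + 1 := by ring
        have h2T := two_TT m
        have h1 : ∃ k : ℕ, 0 < k ∧ 1 * (k * k) = M + 1 := ⟨2 * m + 1, by omega, by omega⟩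
        rw [if_pos h1]
        ring
      · rw [if_neg h4, if_neg h8, if_neg]
        · ring
        · rintro ⟨k, hk, hke⟩
          rw [one_mul] at hke
          rcases Nat.even_or_odd k with ⟨j, hj⟩ | ⟨j, hj⟩
          · subst hj
            have hexp : (j + j) * (j + j) = 4 * (j * j) := by ring
            exact h4 ⟨j, by omega, by omega⟩
          · subst hj
            have hexp : (2 * j + 1) * (2 * j + 1) = 4 * (j * (j + 1)) + 1 := by ring
            have h2T := two_TT j
            exact h8 ⟨j, by omega⟩

/-! ### assembly -/

lemma gfe (r : ℕ) (hr : 0 < r) : gL r * fL r * fL (4 * r) = fL (2 * r) * fL (2 * r) := by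
  have h4 : fL r = eL r * fL (2 * r) := E4 r hr
  have h42 : fL (2 * r) = eL (2 * r) * fL (2 * (2 * r)) := E4 (2 * r) (by omega)
  rw [show 2 * (2 * r) = 4 * r from by ring] at h42
  have h3 : gL r * eL r = eL (2 * r) := E3 r hr
  calc gL r * fL r * fL (4 * r)
      = (gL r * eL r) * fL (4 * r) * fL (2 * r) := by rw [h4]; ring
    _ = eL (2 * r) * fL (4 * r) * fL (2 * r) := by rw [h3]
    _ = fL (2 * r) * fL (2 * r) := by rw [← h42]

lemma A1 (r : ℕ) (hr : 0 < r) :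
    thA r * (fL r * fL r) * (fL (4 * r) * fL (4 * r)) = fL (2 * r) ^ 5 := by
  rw [← E1 r hr]
  calc fL (2 * r) * (gL r * gL r) * (fL r * fL r) * (fL (4 * r) * fL (4 * r))
      = fL (2 * r) * ((gL r * fL r * fL (4 * r)) * (gL r * fL r * fL (4 * r))) := by ring
    _ = fL (2 * r) * ((fL (2 * r) * fL (2 * r)) * (fL (2 * r) * fL (2 * r))) := by
        rw [gfe r hr]
    _ = fL (2 * r) ^ 5 := by ring

lemma A2 (r : ℕ) (hr : 0 < r) : thB r * fL r = fL (2 * r) * fL (2 * r) := by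
  rw [← E2 r hr]
  calc fL (4 * r) * gL r * fL r = gL r * fL r * fL (4 * r) := by ring
    _ = _ := gfe r hr

lemma star : fL 2 ^ 5 * fL 8 * fL 16 ^ 2
    = fL 1 ^ 2 * fL 8 ^ 6 + 2 * X * (fL 1 ^ 2 * fL 4 ^ 2 * fL 16 ^ 4) := by
  have h1 := A1 1 (by norm_num)
  have h4 := A1 4 (by norm_num)
  have h8 := A2 8 (by norm_num)
  norm_num at h1 h4 h8
  have h5 := E5
  linear_combination (-(fL 8 * fL 16 ^ 2)) * h1
    + (fL 1 ^ 2 * fL 4 ^ 2 * fL 8 * fL 16 ^ 2) * h5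
    + (fL 1 ^ 2 * fL 8) * h4
    + (2 * X * fL 1 ^ 2 * fL 4 ^ 2 * fL 16 ^ 2) * h8

lemma fL_cc (r : ℕ) (hr : 0 < r) : constantCoeff (fL r) = 1 := by
  rw [← coeff_zero_eq_constantCoeff_apply, fL, coeff_mk, fP, Finset.prod_range_one, map_sub,
    coeff_one, coeff_X_pow, if_pos rfl, if_neg (by omega)]
  ring

end OPD


end

/-- The 2-dissection of the overpartition generating function:
`f_2 / f_1^2 = f_8^5 / (f_2^4 f_16^2) + 2 q f_4^2 f_16^2 / (f_2^4 f_8)` in `ℤ[[q]]`.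
All denominators are units (constant term `1`), and `Ring.inverse` gives their inverses. -/
theorem overpartition_two_dissection :
    f 2 * Ring.inverse (f 1 ^ 2) =
      f 8 ^ 5 * Ring.inverse (f 2 ^ 4 * f 16 ^ 2) +
        2 * PowerSeries.X * (f 4 ^ 2 * f 16 ^ 2 * Ring.inverse (f 2 ^ 4 * f 8)) := by
  have hfe : ∀ r : ℕ, f r = OPD.fL r := fun r => rfl
  have hcc : ∀ r : ℕ, 0 < r → PowerSeries.constantCoeff (f r) = 1 := fun r hr => by
    rw [hfe r]; exact OPD.fL_cc r hr
  have h1u : IsUnit (f 1 ^ 2) := by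
    rw [PowerSeries.isUnit_iff_constantCoeff, map_pow, hcc 1 (by norm_num)]
    norm_num
  have h2u : IsUnit (f 2 ^ 4 * f 16 ^ 2) := by
    rw [PowerSeries.isUnit_iff_constantCoeff, map_mul, map_pow, map_pow,
      hcc 2 (by norm_num), hcc 16 (by norm_num)]
    norm_num
  have h3u : IsUnit (f 2 ^ 4 * f 8) := by
    rw [PowerSeries.isUnit_iff_constantCoeff, map_mul, map_pow,
      hcc 2 (by norm_num), hcc 8 (by norm_num)]
    norm_num
  have hi1 : f 1 ^ 2 * Ring.inverse (f 1 ^ 2) = 1 := Ring.mul_inverse_cancel _ h1u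
  have hi2 : (f 2 ^ 4 * f 16 ^ 2) * Ring.inverse (f 2 ^ 4 * f 16 ^ 2) = 1 :=
    Ring.mul_inverse_cancel _ h2u
  have hi3 : (f 2 ^ 4 * f 8) * Ring.inverse (f 2 ^ 4 * f 8) = 1 :=
    Ring.mul_inverse_cancel _ h3u
  have hstar : f 2 ^ 5 * f 8 * f 16 ^ 2
      = f 1 ^ 2 * f 8 ^ 6 + 2 * PowerSeries.X * (f 1 ^ 2 * f 4 ^ 2 * f 16 ^ 4) := by
    rw [hfe 1, hfe 2, hfe 4, hfe 8, hfe 16]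
    exact OPD.star
  refine mul_right_cancel₀ (IsUnit.ne_zero (h1u.mul (h2u.mul h3u))) ?_
  linear_combination (f 2 * (f 2 ^ 4 * f 16 ^ 2) * (f 2 ^ 4 * f 8)) * hi1
    - (f 8 ^ 5 * f 1 ^ 2 * (f 2 ^ 4 * f 8)) * hi2
    - (2 * PowerSeries.X * (f 4 ^ 2 * f 16 ^ 2) * f 1 ^ 2 * (f 2 ^ 4 * f 16 ^ 2)) * hi3
    + (f 2 ^ 4) * hstar
end

section
/- Let x, y, u, v be complex numbers satisfying u + v = xy and uv = x² + y² − 4. Then H(G(x,q)·G(y,q)) = G(u,q)·G(v,q) in ℂ[[q]]. -/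
/-- The formal power series `∑_{n ≥ 1} c(n) q^{e(n)}` in `ℂ[[q]]`, defined coefficientwise.
(Any `n ≥ 1` with `n² = k` satisfies `n ≤ k + 1`, so the truncated range captures every term.) -/
noncomputable def mkSum (e : ℕ → ℕ) (c : ℕ → ℂ) : PowerSeries ℂ :=
  PowerSeries.mk fun k => ∑ n ∈ Finset.range (k + 2), if 1 ≤ n ∧ e n = k then c n else 0

/-- `G(x,q) = 1 + 2 ∑_{n ≥ 1} T_{2n}(x/2) q^{n²}`, where `T` is the Chebyshev polynomial of the
first kind. -/
noncomputable def G (x : ℂ) : PowerSeries ℂ :=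
  1 + 2 * mkSum (fun n => n ^ 2) fun n => (Polynomial.Chebyshev.T ℂ (2 * (n : ℤ))).eval (x / 2)

/-- The 2-dissection ("huffing") operator `H(∑ a_n q^n) = ∑ a_{2n} q^n`. -/
noncomputable def H (F : PowerSeries ℂ) : PowerSeries ℂ :=
  PowerSeries.mk fun n => PowerSeries.coeff (2 * n) F

open Polynomial Polynomial.Chebyshev Finset

lemma cheb_eval (z : ℂ) (hz : z ≠ 0) (n : ℤ) :
    (T ℂ n).eval ((z + z⁻¹)/2) = (z ^ n + z ^ (-n)) / 2 := by
  have hzk : ∀ k : ℤ, z ^ k ≠ 0 := fun k => zpow_ne_zero k hz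
  induction n using Polynomial.Chebyshev.induct with
  | zero => simp
  | one => simp [zpow_neg]
  | add_two n h1 h2 =>
      rw [T_add_two]
      simp only [eval_sub, eval_mul, eval_ofNat, eval_X, h1, h2]
      have e1 : z ^ ((n:ℤ)+1) = z ^ (n:ℤ) * z := zpow_add_one₀ hz _
      have e2 : z ^ ((n:ℤ)+2) = z ^ (n:ℤ) * z * z := by
        rw [zpow_add₀ hz, zpow_two]; ring
      have e3 : z ^ (-((n:ℤ)+1)) = (z ^ (n:ℤ))⁻¹ * z⁻¹ := by
        rw [neg_add, zpow_add₀ hz, zpow_neg, zpow_neg, zpow_one]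
      have e4 : z ^ (-((n:ℤ)+2)) = (z ^ (n:ℤ))⁻¹ * z⁻¹ * z⁻¹ := by
        rw [neg_add, zpow_add₀ hz, zpow_neg, zpow_neg, zpow_two, mul_inv]; ring
      have e5 : z ^ (-(n:ℤ)) = (z ^ (n:ℤ))⁻¹ := zpow_neg z _
      rw [e1, e2, e3, e4, e5]
      have ha := hzk (n:ℤ)
      generalize z ^ (n:ℤ) = a at ha ⊢
      field_simp
      ring
  | neg_add_one n h1 h2 =>
      rw [show (-(n:ℤ) - 1) = (-(n:ℤ) + 1) - 2 by ring, T_sub_two,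
        show (-(n:ℤ) + 1 - 1) = -(n:ℤ) by ring]
      simp only [eval_sub, eval_mul, eval_ofNat, eval_X, h1, h2, neg_neg]
      rw [show (-(n:ℤ)+1-2) = -(n:ℤ)-1 by ring,
        show (-(-(n:ℤ)+1)) = (n:ℤ)-1 by ring, show (-(-(n:ℤ)-1)) = (n:ℤ)+1 by ring]
      have e1 : z ^ (-(n:ℤ)) = (z ^ (n:ℤ))⁻¹ := zpow_neg z _
      have e2 : z ^ (-(n:ℤ)+1) = (z ^ (n:ℤ))⁻¹ * z := by
        rw [zpow_add₀ hz, e1, zpow_one]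
      have e3 : z ^ ((n:ℤ)-1) = z ^ (n:ℤ) * z⁻¹ := by
        rw [sub_eq_add_neg, zpow_add₀ hz, zpow_neg, zpow_one]
      have e4 : z ^ (-(n:ℤ)-1) = (z ^ (n:ℤ))⁻¹ * z⁻¹ := by
        rw [sub_eq_add_neg, zpow_add₀ hz, e1, zpow_neg, zpow_one]
      have e5 : z ^ ((n:ℤ)+1) = z ^ (n:ℤ) * z := zpow_add_one₀ hz _
      rw [e1, e2, e3, e4, e5]
      have ha := hzk (n:ℤ)
      generalize z ^ (n:ℤ) = a at ha ⊢
      field_simp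
      ring

lemma coeff_G (z : ℂ) (hz : z ≠ 0) (i : ℕ) :
    PowerSeries.coeff i (G (z + z⁻¹)) =
      ∑ n ∈ Finset.Icc (-(i:ℤ)) i, if n^2 = (i:ℤ) then z^(2*n) else 0 := by
  have h2 : (2 : PowerSeries ℂ) = PowerSeries.C 2 := (map_ofNat _ 2).symm
  rw [G, h2, map_add, PowerSeries.coeff_C_mul, mkSum, PowerSeries.coeff_mk,
    PowerSeries.coeff_one]
  by_cases h0 : i = 0
  · subst h0
    rw [if_pos rfl, Finset.sum_eq_zero (fun n _ => by
      have hn : ¬(1 ≤ n ∧ n ^ 2 = 0) := by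
        rintro ⟨ha, hb⟩
        rw [pow_eq_zero_iff (by norm_num)] at hb
        omega
      rw [if_neg hn])]
    simp
  · simp only [h0, if_false, zero_add]
    by_cases hsq : ∃ m : ℕ, 1 ≤ m ∧ m^2 = i
    · obtain ⟨m, hm1, hm2⟩ := hsq
      have hmi : m ≤ i := hm2 ▸ Nat.le_self_pow two_ne_zero m
      have hL : ∑ n ∈ Finset.range (i + 2),
          (if 1 ≤ n ∧ n ^ 2 = i then (T ℂ (2 * (n:ℤ))).eval ((z + z⁻¹) / 2) else 0)
          = (T ℂ (2 * (m:ℤ))).eval ((z + z⁻¹) / 2) := by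
        rw [Finset.sum_eq_single m]
        · simp [hm1, hm2]
        · intro b _ hbm
          have : ¬ (1 ≤ b ∧ b ^ 2 = i) := by
            rintro ⟨hb1, hb2⟩
            exact hbm (Nat.pow_left_injective (by norm_num) (hb2.trans hm2.symm))
          simp [this]
        · intro h
          exact absurd (Finset.mem_range.mpr (by omega)) h
      rw [hL, cheb_eval z hz]
      have hR : ∑ n ∈ Finset.Icc (-(i:ℤ)) i, (if n^2 = (i:ℤ) then z^(2*n) else 0)
          = ∑ n ∈ ({(m:ℤ), -(m:ℤ)} : Finset ℤ), (if n^2 = (i:ℤ) then z^(2*n) else 0) := by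
        refine (Finset.sum_subset ?_ ?_).symm
        · intro n hn
          simp only [Finset.mem_insert, Finset.mem_singleton] at hn
          rcases hn with rfl | rfl <;>
            · simp only [Finset.mem_Icc]
              omega
        · intro n hn hn'
          have : ¬ (n^2 = (i:ℤ)) := by
            intro h
            have hfac : (n - m) * (n + m) = 0 := by
              have : ((m:ℤ))^2 = (i:ℤ) := by exact_mod_cast congrArg (Nat.cast : ℕ → ℤ) hm2
              linear_combination h - this
            rcases mul_eq_zero.mp hfac with h' | h'
            · exact hn' (by simp [show n = (m:ℤ) by omega])
            · exact hn' (by simp [show n = -(m:ℤ) by omega])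
          simp [this]
      rw [hR, Finset.sum_pair (by omega : (m:ℤ) ≠ -(m:ℤ))]
      have hm2' : ((m:ℤ))^2 = (i:ℤ) := by exact_mod_cast congrArg (Nat.cast : ℕ → ℤ) hm2
      have hm2'' : (-(m:ℤ))^2 = (i:ℤ) := by rw [neg_pow]; simp [hm2']
      rw [if_pos hm2', if_pos hm2'', show (2:ℤ)*(-(m:ℤ)) = -(2*(m:ℤ)) by ring]
      ring
    · have hL : ∑ n ∈ Finset.range (i + 2),
          (if 1 ≤ n ∧ n ^ 2 = i then (T ℂ (2 * (n:ℤ))).eval ((z + z⁻¹) / 2) else 0) = 0 := by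
        refine Finset.sum_eq_zero fun n _ => ?_
        have : ¬ (1 ≤ n ∧ n ^ 2 = i) := fun h => hsq ⟨n, h⟩
        simp [this]
      have hR : ∑ n ∈ Finset.Icc (-(i:ℤ)) i, (if n^2 = (i:ℤ) then z^(2*n) else 0) = 0 := by
        refine Finset.sum_eq_zero fun n _ => ?_
        have : ¬ (n^2 = (i:ℤ)) := by
          intro h
          apply hsq
          refine ⟨n.natAbs, ?_, ?_⟩
          · rcases Nat.eq_zero_or_pos n.natAbs with h' | h'
            · exfalso; apply h0
              have : n = 0 := by omega
              subst this; exact_mod_cast h.symm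
            · exact h'
          · have habs : ((n.natAbs : ℤ))^2 = (i:ℤ) := by
              rw [← Int.abs_eq_natAbs, sq_abs, h]
            exact_mod_cast habs
        simp [this]
      rw [hL, hR]
      ring

-- extend range of coeff_G sum
lemma coeff_G' (z : ℂ) (hz : z ≠ 0) {i k : ℕ} (hik : i ≤ k) :
    PowerSeries.coeff i (G (z + z⁻¹)) =
      ∑ n ∈ Finset.Icc (-(k:ℤ)) k, if n^2 = (i:ℤ) then z^(2*n) else 0 := by
  rw [coeff_G z hz]
  refine Finset.sum_subset ?_ ?_
  · intro n hn
    simp only [Finset.mem_Icc] at *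
    omega
  · intro n hn hn'
    simp only [Finset.mem_Icc] at hn hn'
    have : ¬ (n^2 = (i:ℤ)) := by
      intro h
      apply hn'
      constructor <;> nlinarith [sq_nonneg (n-1), sq_nonneg (n+1)]
    simp [this]

lemma antidiag_collapse (a b : ℂ) (m n : ℤ) (k : ℕ) :
    ∑ p ∈ Finset.HasAntidiagonal.antidiagonal k,
      (if m^2 = (p.1:ℤ) then a else 0) * (if n^2 = (p.2:ℤ) then b else 0)
      = if m^2 + n^2 = (k:ℤ) then a * b else 0 := by
  have h1 : ((m^2).toNat : ℤ) = m^2 := Int.toNat_of_nonneg (sq_nonneg m)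
  have h2 : ((n^2).toNat : ℤ) = n^2 := Int.toNat_of_nonneg (sq_nonneg n)
  by_cases h : m^2 + n^2 = (k:ℤ)
  · rw [if_pos h, Finset.sum_eq_single ((m^2).toNat, (n^2).toNat)]
    · rw [if_pos h1.symm, if_pos h2.symm]
    · rintro ⟨p1, p2⟩ hp hne
      by_cases hm : m^2 = (p1:ℤ)
      · by_cases hn2 : n^2 = (p2:ℤ)
        · exfalso; apply hne
          have e1 : p1 = (m^2).toNat := by omega
          have e2 : p2 = (n^2).toNat := by omega
          exact Prod.ext e1 e2
        · simp [hn2]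
      · simp [hm]
    · intro hmem
      exfalso; apply hmem
      rw [Finset.HasAntidiagonal.mem_antidiagonal]
      omega
  · rw [if_neg h]
    refine Finset.sum_eq_zero fun p hp => ?_
    rw [Finset.HasAntidiagonal.mem_antidiagonal] at hp
    by_cases hm : m^2 = (p.1:ℤ)
    · by_cases hn2 : n^2 = (p.2:ℤ)
      · exfalso; apply h; rw [hm, hn2]; exact_mod_cast congrArg (Nat.cast : ℕ → ℤ) hp
      · simp [hn2]
    · simp [hm]

lemma coeff_G_mul_G (z w : ℂ) (hz : z ≠ 0) (hw : w ≠ 0) (k : ℕ) :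
    PowerSeries.coeff k (G (z + z⁻¹) * G (w + w⁻¹)) =
      ∑ p ∈ Finset.Icc (-(k:ℤ)) k ×ˢ Finset.Icc (-(k:ℤ)) k,
        if p.1^2 + p.2^2 = (k:ℤ) then z^(2*p.1) * w^(2*p.2) else 0 := by
  rw [PowerSeries.coeff_mul]
  have step : ∀ p ∈ Finset.HasAntidiagonal.antidiagonal k,
      PowerSeries.coeff p.1 (G (z + z⁻¹)) * PowerSeries.coeff p.2 (G (w + w⁻¹))
      = ∑ q ∈ Finset.Icc (-(k:ℤ)) k ×ˢ Finset.Icc (-(k:ℤ)) k,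
          (if q.1^2 = (p.1:ℤ) then z^(2*q.1) else 0) *
          (if q.2^2 = (p.2:ℤ) then w^(2*q.2) else 0) := by
    intro p hp
    rw [Finset.HasAntidiagonal.mem_antidiagonal] at hp
    rw [coeff_G' z hz (by omega : p.1 ≤ k), coeff_G' w hw (by omega : p.2 ≤ k),
      Finset.sum_mul_sum, ← Finset.sum_product']
  rw [Finset.sum_congr rfl step, Finset.sum_comm]
  refine Finset.sum_congr rfl fun q hq => ?_
  exact antidiag_collapse (z^(2*q.1)) (w^(2*q.2)) q.1 q.2 k

lemma sq_bound {a b k : ℤ} (hk : 0 ≤ k) (h : a^2 + b^2 = k) : -k ≤ a ∧ a ≤ k := by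
  constructor
  · nlinarith [sq_nonneg b, sq_nonneg (a+1)]
  · nlinarith [sq_nonneg b, sq_nonneg (a-1)]

lemma even_add_of_sq (m n k : ℤ) (h : m^2 + n^2 = 2*k) : (2:ℤ) ∣ (m + n) := by
  have he : Even ((m+n)^2) := ⟨k + m*n, by linear_combination h⟩
  have := (Int.even_pow.mp he).1
  exact this.two_dvd

lemma value_eq (z w : ℂ) (hz : z ≠ 0) (hw : w ≠ 0) (a b : ℤ) :
    z^(2*(a+b)) * w^(2*(a-b)) = (z*w)^(2*a) * (z*w⁻¹)^(2*b) := by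
  rw [mul_zpow, mul_zpow, inv_zpow, ← zpow_neg,
    show 2*(a+b) = 2*a + 2*b by ring, zpow_add₀ hz,
    show 2*(a-b) = 2*a + -(2*b) by ring, zpow_add₀ hw]
  ring

lemma dissect (z w : ℂ) (hz : z ≠ 0) (hw : w ≠ 0) (k : ℕ) :
    ∑ p ∈ Finset.Icc (-(2*(k:ℤ))) (2*k) ×ˢ Finset.Icc (-(2*(k:ℤ))) (2*k),
      (if p.1^2 + p.2^2 = 2*(k:ℤ) then z^(2*p.1) * w^(2*p.2) else 0)
    = ∑ q ∈ Finset.Icc (-(k:ℤ)) k ×ˢ Finset.Icc (-(k:ℤ)) k,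
      (if q.1^2 + q.2^2 = (k:ℤ) then (z*w)^(2*q.1) * (z*w⁻¹)^(2*q.2) else 0) := by
  rw [← Finset.sum_filter, ← Finset.sum_filter]
  refine Finset.sum_nbij' (i := fun p => ((p.1+p.2)/2, (p.1-p.2)/2))
    (j := fun q => (q.1+q.2, q.1-q.2)) ?_ ?_ ?_ ?_ ?_
  · rintro ⟨m, n⟩ hp
    simp only [Finset.mem_filter, Finset.mem_product, Finset.mem_Icc] at hp ⊢
    obtain ⟨⟨⟨hm1, hm2⟩, hn1, hn2⟩, hsum⟩ := hp
    obtain ⟨r, hr⟩ := even_add_of_sq m n k hsum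
    have hr2 : m - n = 2*(r - n) := by omega
    have e1 : (m+n)/2 = r := by omega
    have e2 : (m-n)/2 = r - n := by omega
    have hq : r^2 + (r-n)^2 = (k:ℤ) := by nlinarith [hsum, hr]
    have b1 := sq_bound (by positivity) hq
    have b2 := sq_bound (by positivity) (by linarith [hq] : (r-n)^2 + r^2 = (k:ℤ))
    rw [e1, e2]
    exact ⟨⟨b1, b2⟩, hq⟩
  · rintro ⟨a, b⟩ hq
    simp only [Finset.mem_filter, Finset.mem_product, Finset.mem_Icc] at hq ⊢
    obtain ⟨⟨⟨ha1, ha2⟩, hb1, hb2⟩, hsum⟩ := hq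
    have hs : (a+b)^2 + (a-b)^2 = 2*(k:ℤ) := by ring_nf; linarith [hsum]
    have b1 := sq_bound (by positivity) hs
    have b2 := sq_bound (by positivity) (by linarith [hs] : (a-b)^2 + (a+b)^2 = 2*(k:ℤ))
    exact ⟨⟨b1, b2⟩, hs⟩
  · rintro ⟨m, n⟩ hp
    simp only [Finset.mem_filter, Finset.mem_product, Finset.mem_Icc] at hp
    obtain ⟨r, hr⟩ := even_add_of_sq m n k hp.2
    have : (m+n)/2 + (m-n)/2 = m := by omega
    have : (m+n)/2 - (m-n)/2 = n := by omega
    simp only [Prod.mk.injEq]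
    omega
  · rintro ⟨a, b⟩ hq
    simp only [Prod.mk.injEq]
    omega
  · rintro ⟨m, n⟩ hp
    simp only [Finset.mem_filter, Finset.mem_product, Finset.mem_Icc] at hp
    obtain ⟨r, hr⟩ := even_add_of_sq m n k hp.2
    have e1 : (m+n)/2 = r := by omega
    have e2 : (m-n)/2 = r - n := by omega
    have hq : r^2 + (r-n)^2 = (k:ℤ) := by nlinarith [hp.2, hr]
    simp only [e1, e2]
    have hv := value_eq z w hz hw r (r-n)
    rw [show r + (r-n) = m by omega, show r - (r-n) = n by omega] at hv
    exact hv

lemma exists_half (x : ℂ) : ∃ z : ℂ, z ≠ 0 ∧ z + z⁻¹ = x := by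
  obtain ⟨s, hs⟩ := IsAlgClosed.exists_pow_nat_eq (x^2 - 4) (n := 2) (by norm_num)
  have hmul : (x+s)/2 * ((x-s)/2) = 1 := by
    field_simp
    linear_combination -hs
  have hz : (x+s)/2 ≠ 0 := by
    intro h
    rw [h, zero_mul] at hmul
    exact one_ne_zero hmul.symm
  refine ⟨(x+s)/2, hz, ?_⟩
  rw [inv_eq_of_mul_eq_one_right hmul]
  ring

/-- If complex numbers `x, y, u, v` satisfy `u + v = xy` and `uv = x² + y² - 4`, then
`H(G(x,q) G(y,q)) = G(u,q) G(v,q)` in `ℂ[[q]]`. -/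
theorem huff_G_mul_G (x y u v : ℂ) (h1 : u + v = x * y) (h2 : u * v = x ^ 2 + y ^ 2 - 4) :
    H (G x * G y) = G u * G v := by
  obtain ⟨z, hz, hzx⟩ := exists_half x
  obtain ⟨w, hw, hwy⟩ := exists_half y
  set A := z*w + (z*w)⁻¹ with hA
  set B := z*w⁻¹ + (z*w⁻¹)⁻¹ with hB
  have hZ : z*w ≠ 0 := mul_ne_zero hz hw
  have hW : z*w⁻¹ ≠ 0 := mul_ne_zero hz (inv_ne_zero hw)
  have hS : A + B = x * y := by
    rw [← hzx, ← hwy, hA, hB]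
    field_simp
    ring
  have hP : A * B = x^2 + y^2 - 4 := by
    rw [← hzx, ← hwy, hA, hB]
    field_simp
    ring
  have key : H (G x * G y) = G A * G B := by
    ext k
    rw [H, PowerSeries.coeff_mk, ← hzx, ← hwy, coeff_G_mul_G z w hz hw (2*k)]
    have hcast : ((2*k : ℕ) : ℤ) = 2*(k:ℤ) := by push_cast; ring
    rw [hcast, dissect z w hz hw k, hA, hB, ← coeff_G_mul_G (z*w) (z*w⁻¹) hZ hW k]
  have hfac : (u - A) * (u - B) = 0 := by
    linear_combination (-u)*hS + hP + u*h1 - h2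
  rcases mul_eq_zero.mp hfac with h | h
  · have hu : u = A := by linear_combination h
    have hv : v = B := by linear_combination h1 - hS - h
    rw [hu, hv]; exact key
  · have hu : u = B := by linear_combination h
    have hv : v = A := by linear_combination h1 - hS - h
    rw [hu, hv, mul_comm (G B) (G A)]; exact key
end

section
/- Let x, y, u, v be complex numbers satisfying u + v = xy and uv = x² + y² − 4. Then in ℂ[[q]]: (1 + 2∑_{n≥1} T_{4n}(x/2) q^{2n²})·(1 + 2∑_{n≥1} T_{4n}(y/2) q^{2n²}) = (1 + 2∑_{n≥1} T_{4n}(u/2) q^{4n²})·(1 + 2∑_{n≥1} T_{4n}(v/2) q^{4n²}) + 4q²·(∑_{n≥1} T_{4n−2}(u/2) q^{4n²−4n})·(∑_{n≥1} T_{4n−2}(v/2) q^{4n²−4n}). -/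

noncomputable def Ik (k : ℕ) : Finset ℤ := Finset.Icc (-(k:ℤ)-1) ((k:ℤ)+1)


lemma cheby_eval (a : ℂ) (ha : a ≠ 0) (j : ℤ) :
    (Polynomial.Chebyshev.T ℂ j).eval ((a + a⁻¹) / 2) = (a ^ j + a ^ (-j)) / 2 := by
  obtain ⟨w, hw⟩ : a ∈ Set.range Complex.exp := by rw [Complex.range_exp]; simpa using ha
  have e1 : ∀ m : ℤ, Complex.exp (m * (w / Complex.I) * Complex.I) = a ^ m := by
    intro m
    rw [mul_assoc, div_mul_cancel₀ _ Complex.I_ne_zero, Complex.exp_int_mul, hw]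
  have hθ : Complex.cos (w / Complex.I) = (a + a⁻¹) / 2 := by
    rw [Complex.cos]
    have h1 := e1 1
    have h2 := e1 (-1)
    push_cast at h1 h2
    rw [one_mul] at h1
    rw [h1]
    rw [show -(w / Complex.I) * Complex.I = -1 * (w / Complex.I) * Complex.I by ring, h2,
      zpow_neg_one, zpow_one]
  rw [← hθ, Polynomial.Chebyshev.T_complex_cos, Complex.cos,
    show -(↑j * (w / Complex.I)) * Complex.I = (-j : ℤ) * (w / Complex.I) * Complex.I by push_cast; ring,
    e1, e1]


lemma sum_Ik_eq (k : ℕ) (P : ℤ → Prop) [DecidablePred P] (f : ℤ → ℂ)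
    (hsym : ∀ m, P m → P (-m))
    (hne : ∀ m, P m → m ≠ 0)
    (hbd : ∀ m, P m → m.natAbs ≤ k + 1) :
    ∑ m ∈ (Ik k).filter P, f m
      = ∑ n ∈ (Finset.range (k+2)).filter (fun n : ℕ => 1 ≤ n ∧ P (n:ℤ)),
          (f (n:ℤ) + f (-(n:ℤ))) := by
  unfold Ik
  rw [Finset.sum_add_distrib]
  rw [← Finset.sum_filter_add_sum_filter_not ((Finset.Icc (-(k:ℤ)-1) ((k:ℤ)+1)).filter P)
    (fun m => 0 < m)]
  congr 1
  · refine Finset.sum_nbij' (fun m => m.toNat) (fun n => (n : ℤ)) ?_ ?_ ?_ ?_ ?_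
    · intro m hm
      simp only [Finset.mem_filter, Finset.mem_Icc, Finset.mem_range] at hm ⊢
      obtain ⟨⟨⟨hb1, hb2⟩, hP⟩, hpos⟩ := hm
      have := hbd m hP
      refine ⟨by omega, by omega, ?_⟩
      rw [Int.toNat_of_nonneg (by omega)]; exact hP
    · intro n hn
      simp only [Finset.mem_filter, Finset.mem_Icc, Finset.mem_range] at hn ⊢
      have := hbd _ hn.2.2
      exact ⟨⟨⟨by omega, by omega⟩, hn.2.2⟩, by omega⟩
    · intro m hm
      simp only [Finset.mem_filter] at hm
      omega
    · intro n hn; simp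
    · intro m hm
      simp only [Finset.mem_filter] at hm
      congr 1
      omega
  · refine Finset.sum_nbij' (fun m => (-m).toNat) (fun n => -(n : ℤ)) ?_ ?_ ?_ ?_ ?_
    · intro m hm
      simp only [Finset.mem_filter, Finset.mem_Icc, Finset.mem_range, not_lt] at hm ⊢
      obtain ⟨⟨⟨hb1, hb2⟩, hP⟩, hpos⟩ := hm
      have h1 := hbd m hP
      have h2 := hne m hP
      refine ⟨by omega, by omega, ?_⟩
      rw [Int.toNat_of_nonneg (by omega)]
      exact hsym m hP
    · intro n hn
      simp only [Finset.mem_filter, Finset.mem_Icc, Finset.mem_range, not_lt] at hn ⊢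
      have h1 := hsym n hn.2.2
      have := hbd _ h1
      exact ⟨⟨⟨by omega, by omega⟩, h1⟩, by omega⟩
    · intro m hm
      simp only [Finset.mem_filter] at hm
      omega
    · intro n hn
      simp only [Finset.mem_filter, Finset.mem_range] at hn
      omega
    · intro m hm
      simp only [Finset.mem_filter, not_lt] at hm
      congr 1
      omega




lemma coeff_theta (cc : ℕ) (hcc : 1 ≤ cc) (a : ℂ) (ha : a ≠ 0) (k : ℕ) :
    PowerSeries.coeff k (1 + 2 * mkSum (fun n => cc * n ^ 2)
        (fun n => (Polynomial.Chebyshev.T ℂ (4 * (n:ℤ))).eval ((a + a⁻¹) / 2)))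
      = ∑ m ∈ (Ik k).filter (fun m => (cc:ℤ) * m ^ 2 = (k:ℤ)), a ^ (4 * m) := by
  have h2 : (2 : PowerSeries ℂ) = PowerSeries.C 2 := by
    rw [map_ofNat]
  rw [map_add, h2, PowerSeries.coeff_C_mul, mkSum, PowerSeries.coeff_mk]
  rcases Nat.eq_zero_or_pos k with rfl | hk
  · simp only [Nat.cast_zero]
    have hset : (Ik 0).filter (fun m => (cc:ℤ) * m ^ 2 = (0:ℤ)) = {0} := by
      ext m
      simp only [Ik, Finset.mem_filter, Finset.mem_Icc, Finset.mem_singleton]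
      constructor
      · rintro ⟨⟨h1, h2'⟩, h3⟩
        have hm : m = -1 ∨ m = 0 ∨ m = 1 := by omega
        rcases hm with rfl | rfl | rfl
        · exfalso; simp at h3; omega
        · rfl
        · exfalso; simp at h3; omega
      · rintro rfl; norm_num
    rw [hset]
    have : ∀ n ∈ Finset.range (0 + 2),
        (if 1 ≤ n ∧ cc * n ^ 2 = 0 then
          (Polynomial.Chebyshev.T ℂ (4 * (n:ℤ))).eval ((a + a⁻¹) / 2) else 0) = 0 := by
      intro n hn
      rw [if_neg]
      rintro ⟨hn1, hn2⟩
      have : n = 0 := by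
        rcases Nat.eq_zero_or_pos n with rfl | hn'
        · rfl
        · exfalso; have : cc * n ^ 2 ≥ 1 := by nlinarith
          omega
      omega
    rw [Finset.sum_congr rfl this]
    simp
  · rw [PowerSeries.coeff_one, if_neg (by omega)]
    have key := sum_Ik_eq k (fun m => (cc:ℤ) * m ^ 2 = (k:ℤ)) (fun m => a ^ (4 * m))
      (fun m hm => by rw [neg_pow]; simpa using hm)
      (fun m hm => by rintro rfl; simp at hm; omega)
      (fun m hm => by
        have h1 : m ≤ m ^ 2 := Int.le_self_sq m
        have h2' : -m ≤ m ^ 2 := by nlinarith [sq_nonneg m]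
        have h4 : m ^ 2 ≤ (k:ℤ) := by nlinarith [(by exact_mod_cast hcc : (1:ℤ) ≤ cc)]
        omega)
    rw [key]
    rw [Finset.sum_filter, zero_add, Finset.mul_sum]
    apply Finset.sum_congr rfl
    intro n hn
    rcases Classical.em (1 ≤ n ∧ cc * n ^ 2 = k) with h | h
    · rw [if_pos h, if_pos ⟨h.1, by push_cast [← h.2]; ring⟩, cheby_eval a ha]
      push_cast
      rw [show -(4 * (n:ℤ)) = 4 * (-(n:ℤ)) by ring]
      ring
    · rw [if_neg h, if_neg, mul_zero]
      rintro ⟨h1, h2'⟩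
      exact h ⟨h1, by exact_mod_cast (by push_cast at h2' ⊢; linarith : ((cc * n ^ 2 : ℕ) : ℤ) = (k:ℤ))⟩


lemma coeff_RR (b : ℂ) (hb : b ≠ 0) (k : ℕ) :
    PowerSeries.coeff k (2 * PowerSeries.X * mkSum (fun n => 4 * n ^ 2 - 4 * n)
        (fun n => (Polynomial.Chebyshev.T ℂ (4 * (n:ℤ) - 2)).eval ((b + b⁻¹) / 2)))
      = ∑ μ ∈ (Ik k).filter (fun μ => μ ^ 2 = (k:ℤ)),
          (if Odd μ then b ^ (2 * μ) else 0) := by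
  have h2 : (2 : PowerSeries ℂ) * PowerSeries.X * mkSum (fun n => 4 * n ^ 2 - 4 * n)
        (fun n => (Polynomial.Chebyshev.T ℂ (4 * (n:ℤ) - 2)).eval ((b + b⁻¹) / 2))
      = PowerSeries.C 2 * (PowerSeries.X * mkSum (fun n => 4 * n ^ 2 - 4 * n)
        (fun n => (Polynomial.Chebyshev.T ℂ (4 * (n:ℤ) - 2)).eval ((b + b⁻¹) / 2))) := by
    rw [map_ofNat, mul_assoc]
  rw [h2, PowerSeries.coeff_C_mul]
  cases k with
  | zero =>
    have hset : (Ik 0).filter (fun μ : ℤ => μ ^ 2 = ((0:ℕ):ℤ)) = {0} := by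
      ext μ
      simp only [Ik, Finset.mem_filter, Finset.mem_Icc, Finset.mem_singleton]
      constructor
      · rintro ⟨⟨h1, h2'⟩, h3⟩
        have hμ : μ ^ 2 = 0 := by exact_mod_cast h3
        exact pow_eq_zero_iff two_ne_zero |>.mp hμ
      · rintro rfl
        norm_num
    rw [hset]
    simp [PowerSeries.coeff_zero_eq_constantCoeff]
  | succ j =>
    rw [PowerSeries.coeff_succ_X_mul, mkSum, PowerSeries.coeff_mk]
    have key := sum_Ik_eq (j+1) (fun μ => μ ^ 2 = ((j:ℤ)+1))
        (fun μ => if Odd μ then b ^ (2 * μ) else 0)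
      (fun μ hμ => by rw [neg_pow]; simpa using hμ)
      (fun μ hμ => by rintro rfl; simp at hμ; omega)
      (fun μ hμ => by
        have h1 : μ ≤ μ ^ 2 := Int.le_self_sq μ
        have h2' : -μ ≤ μ ^ 2 := by nlinarith [sq_nonneg μ]
        omega)
    have hcast : ((j+1 : ℕ) : ℤ) = (j:ℤ) + 1 := by push_cast; ring
    rw [show (Ik (j+1)).filter (fun μ : ℤ => μ ^ 2 = ((j+1:ℕ):ℤ))
        = (Ik (j+1)).filter (fun μ : ℤ => μ ^ 2 = ((j:ℤ)+1)) by rw [hcast], key]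
    have step1 : (2 : ℂ) * ∑ n ∈ Finset.range (j + 2),
        (if 1 ≤ n ∧ 4 * n ^ 2 - 4 * n = j then
          (Polynomial.Chebyshev.T ℂ (4 * (n:ℤ) - 2)).eval ((b + b⁻¹) / 2) else 0)
        = ∑ n ∈ (Finset.range (j + 2)).filter (fun n => 1 ≤ n ∧ 4 * n ^ 2 - 4 * n = j),
            2 * (Polynomial.Chebyshev.T ℂ (4 * (n:ℤ) - 2)).eval ((b + b⁻¹) / 2) := by
      rw [Finset.sum_filter, Finset.mul_sum]
      exact Finset.sum_congr rfl fun n _ => by split <;> simp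
    rw [step1]
    have step2 : ∑ n ∈ (Finset.range (j+1+2)).filter (fun n : ℕ => 1 ≤ n ∧ (n:ℤ) ^ 2 = (j:ℤ)+1),
          ((if Odd (n:ℤ) then b ^ (2 * (n:ℤ)) else 0) + (if Odd (-(n:ℤ)) then b ^ (2 * (-(n:ℤ))) else 0))
        = ∑ n ∈ (Finset.range (j+1+2)).filter
              (fun n : ℕ => (1 ≤ n ∧ (n:ℤ) ^ 2 = (j:ℤ)+1) ∧ Odd n),
            ((if Odd (n:ℤ) then b ^ (2 * (n:ℤ)) else 0) + (if Odd (-(n:ℤ)) then b ^ (2 * (-(n:ℤ))) else 0)) := by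
      rw [eq_comm]
      apply Finset.sum_subset
      · intro n hn
        simp only [Finset.mem_filter] at hn ⊢
        exact ⟨hn.1, hn.2.1⟩
      · intro n hn hn2
        simp only [Finset.mem_filter] at hn hn2
        have hev : ¬ Odd n := fun h => hn2 ⟨hn.1, hn.2, h⟩
        have h1 : ¬ Odd (n:ℤ) := by rwa [Int.odd_coe_nat]
        have h2'' : ¬ Odd (-(n:ℤ)) := by rwa [odd_neg, Int.odd_coe_nat]
        rw [if_neg h1, if_neg h2'', add_zero]
    rw [step2]
    refine Finset.sum_nbij' (fun m : ℕ => 2 * m - 1) (fun n : ℕ => (n + 1) / 2) ?_ ?_ ?_ ?_ ?_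
    · intro m hm
      simp only [Finset.mem_filter, Finset.mem_range] at hm ⊢
      obtain ⟨hr, h1, he⟩ := hm
      have hle : 4 * m ≤ 4 * m ^ 2 := by nlinarith
      have he' : 4 * m ^ 2 = j + 4 * m := by omega
      have hq : 2 * m ≤ m ^ 2 + 1 := by nlinarith [sq_nonneg (m - 1), Nat.sub_add_cancel h1]
      refine ⟨by omega, ⟨by omega, ?_⟩, ⟨m - 1, by omega⟩⟩
      push_cast [Nat.cast_sub (by omega : 1 ≤ 2 * m)]
      have hz : 4 * (m:ℤ) ^ 2 = (j:ℤ) + 4 * (m:ℤ) := by exact_mod_cast he'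
      linear_combination hz
    · intro n hn
      simp only [Finset.mem_filter, Finset.mem_range] at hn ⊢
      obtain ⟨hr, ⟨h1, he⟩, hodd⟩ := hn
      obtain ⟨c, hc⟩ := hodd
      have hn2 : n ^ 2 = j + 1 := by exact_mod_cast he
      have hcle : c + 1 ≤ n := by omega
      refine ⟨?_, by omega, ?_⟩
      · have : (c+1) ^ 2 ≤ n ^ 2 := Nat.pow_le_pow_left hcle 2
        have h3 : c + 1 ≤ (c+1)^2 := Nat.le_self_pow two_ne_zero _
        omega
      · have : n ^ 2 = (2 * c + 1) ^ 2 := by rw [hc]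
        have h4 : (2*c+1)^2 = 4 * c^2 + 4*c + 1 := by ring
        have h5 : ((n+1)/2) = c + 1 := by omega
        rw [h5]
        have h6 : 4 * (c+1) ≤ 4 * (c+1)^2 := by nlinarith
        have h7 : (c+1)^2 = c^2 + 2*c + 1 := by ring
        omega
    · intro m hm
      simp only [Finset.mem_filter, Finset.mem_range] at hm
      omega
    · intro n hn
      simp only [Finset.mem_filter, Finset.mem_range] at hn
      obtain ⟨hr, ⟨h1, he⟩, hodd⟩ := hn
      obtain ⟨c, hc⟩ := hodd
      omega
    · intro m hm
      simp only [Finset.mem_filter, Finset.mem_range] at hm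
      obtain ⟨hr, h1, he⟩ := hm
      have hodd : Odd ((2 * m - 1 : ℕ) : ℤ) := by
        rw [Int.odd_coe_nat]
        exact ⟨m - 1, by omega⟩
      have hodd2 : Odd (-((2 * m - 1 : ℕ) : ℤ)) := by rwa [odd_neg]
      rw [if_pos hodd, if_pos hodd2, cheby_eval b hb]
      have hc : ((2 * m - 1 : ℕ) : ℤ) = 2 * (m:ℤ) - 1 := by
        push_cast [Nat.cast_sub (by omega : 1 ≤ 2 * m)]; ring
      rw [hc]
      rw [show 2 * (2 * (m:ℤ) - 1) = 4 * (m:ℤ) - 2 by ring,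
        show 2 * -(2 * (m:ℤ) - 1) = -(4 * (m:ℤ) - 2) by ring]
      ring


lemma coeff_mul_conv (F G : PowerSeries ℂ) (ef eg : ℤ → ℤ) (f g : ℤ → ℂ)
    (hef : ∀ m, |m| ≤ ef m) (heg : ∀ m, |m| ≤ eg m)
    (hF : ∀ i : ℕ, PowerSeries.coeff i F = ∑ m ∈ (Ik i).filter (fun m => ef m = (i:ℤ)), f m)
    (hG : ∀ i : ℕ, PowerSeries.coeff i G = ∑ m ∈ (Ik i).filter (fun m => eg m = (i:ℤ)), g m)
    (k : ℕ) :
    PowerSeries.coeff k (F * G)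
      = ∑ p ∈ ((Ik k) ×ˢ (Ik k)).filter (fun p => ef p.1 + eg p.2 = (k:ℤ)),
          f p.1 * g p.2 := by
  have hsub : ∀ i : ℕ, i ≤ k → ∀ (e : ℤ → ℤ), (∀ m, |m| ≤ e m) →
      (Ik i).filter (fun m => e m = (i:ℤ)) = (Ik k).filter (fun m => e m = (i:ℤ)) := by
    intro i hi e he
    ext m
    simp only [Ik, Finset.mem_filter, Finset.mem_Icc]
    constructor
    · rintro ⟨⟨ha1, ha2⟩, h3⟩
      exact ⟨⟨by omega, by omega⟩, h3⟩
    · rintro ⟨⟨ha1, ha2⟩, h3⟩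
      have := he m
      rw [h3] at this
      rw [abs_le] at this
      exact ⟨⟨by omega, by omega⟩, h3⟩
  rw [PowerSeries.coeff_mul]
  have step1 : ∀ p ∈ Finset.HasAntidiagonal.antidiagonal k,
      PowerSeries.coeff p.1 F * PowerSeries.coeff p.2 G
        = ∑ q ∈ ((Ik k) ×ˢ (Ik k)).filter (fun q => ef q.1 = (p.1:ℤ) ∧ eg q.2 = (p.2:ℤ)),
            f q.1 * g q.2 := by
    intro p hp
    rw [Finset.HasAntidiagonal.mem_antidiagonal] at hp
    rw [hF, hG, hsub p.1 (by omega) ef hef, hsub p.2 (by omega) eg heg,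
      Finset.sum_mul_sum,
      Finset.filter_product (fun m => ef m = (p.1:ℤ)) (fun m => eg m = (p.2:ℤ)),
      Finset.sum_product]
  rw [Finset.sum_congr rfl step1]
  rw [← Finset.sum_fiberwise_of_maps_to (g := fun q : ℤ × ℤ => ((ef q.1).toNat, (eg q.2).toNat))
    (t := Finset.HasAntidiagonal.antidiagonal k) ?_]
  · apply Finset.sum_congr rfl
    intro p hp
    obtain ⟨p1, p2⟩ := p
    rw [Finset.HasAntidiagonal.mem_antidiagonal] at hp
    apply Finset.sum_congr
    · ext q
      simp only [Ik, Finset.mem_filter, Finset.mem_product, Finset.mem_Icc, Prod.mk.injEq]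
      have e1 : (0:ℤ) ≤ ef q.1 := le_trans (abs_nonneg _) (hef q.1)
      have e2 : (0:ℤ) ≤ eg q.2 := le_trans (abs_nonneg _) (heg q.2)
      omega
    · intro q _
      rfl
  · intro q hq
    simp only [Finset.mem_filter, Finset.mem_product] at hq
    rw [Finset.HasAntidiagonal.mem_antidiagonal]
    have hsum := hq.2
    have e1 : (0:ℤ) ≤ ef q.1 := le_trans (abs_nonneg _) (hef q.1)
    have e2 : (0:ℤ) ≤ eg q.2 := le_trans (abs_nonneg _) (heg q.2)
    dsimp only
    omega


lemma abs_le_sq (z : ℤ) : |z| ≤ z ^ 2 := by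
  rcases le_or_gt 0 z with h | h
  · rw [abs_of_nonneg h]; exact Int.le_self_sq z
  · rw [abs_of_neg h]; nlinarith

lemma zpow_key (a d : ℂ) (ha : a ≠ 0) (hd : d ≠ 0) (s t : ℤ) :
    (a * d) ^ (2 * (s + t)) * (a * d⁻¹) ^ (2 * (s - t)) = a ^ (4 * s) * d ^ (4 * t) := by
  have h1 : a ^ (4 * s) = a ^ (2 * (s + t)) * a ^ (2 * (s - t)) := by
    rw [← zpow_add₀ ha]; ring_nf
  have h2 : d ^ (4 * t) = d ^ (2 * (s + t)) * d ^ (-(2 * (s - t))) := by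
    rw [← zpow_add₀ hd]; ring_nf
  rw [mul_zpow, mul_zpow, inv_zpow, ← zpow_neg, h1, h2]
  ring

lemma master (a d : ℂ) (ha : a ≠ 0) (hd : d ≠ 0) (k : ℕ) :
    ∑ p ∈ ((Ik k) ×ˢ (Ik k)).filter (fun p => 2 * p.1 ^ 2 + 2 * p.2 ^ 2 = (k:ℤ)),
        a ^ (4 * p.1) * d ^ (4 * p.2)
      = (∑ p ∈ ((Ik k) ×ˢ (Ik k)).filter (fun p => 4 * p.1 ^ 2 + 4 * p.2 ^ 2 = (k:ℤ)),
          (a * d) ^ (4 * p.1) * (a * d⁻¹) ^ (4 * p.2))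
        + ∑ p ∈ ((Ik k) ×ˢ (Ik k)).filter (fun p => p.1 ^ 2 + p.2 ^ 2 = (k:ℤ)),
            (if Odd p.1 then (a * d) ^ (2 * p.1) else 0)
              * (if Odd p.2 then (a * d⁻¹) ^ (2 * p.2) else 0) := by
  rw [← Finset.sum_filter_add_sum_filter_not
    (((Ik k) ×ˢ (Ik k)).filter (fun p => 2 * p.1 ^ 2 + 2 * p.2 ^ 2 = (k:ℤ)))
    (fun p => Even (p.1 + p.2))]
  congr 1
  -- even part
  · refine Finset.sum_nbij' (fun p : ℤ × ℤ => ((p.1 + p.2) / 2, (p.1 - p.2) / 2))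
      (fun q : ℤ × ℤ => (q.1 + q.2, q.1 - q.2)) ?_ ?_ ?_ ?_ ?_
    · rintro ⟨s, t⟩ hp
      simp only [Ik, Finset.mem_filter, Finset.mem_product, Finset.mem_Icc] at hp ⊢
      obtain ⟨⟨⟨⟨c1, c2⟩, c3, c4⟩, hk⟩, w, hw⟩ := hp
      have h1 : (s+t)^2 ≤ (k:ℤ) := by nlinarith [sq_nonneg (s - t)]
      have h2 : (s-t)^2 ≤ (k:ℤ) := by nlinarith [sq_nonneg (s + t)]
      have h3 := abs_le_sq (s+t)
      have h4 := abs_le_sq (s-t)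
      rw [abs_le] at h3 h4
      have e1 : (s + t) / 2 = w := by omega
      have e2 : (s - t) / 2 = s - w := by omega
      rw [e1, e2]
      have ht : t = w + w - s := by omega
      subst ht
      refine ⟨⟨⟨by omega, by omega⟩, by omega, by omega⟩, by linear_combination hk⟩
    · rintro ⟨m, n⟩ hq
      simp only [Ik, Finset.mem_filter, Finset.mem_product, Finset.mem_Icc] at hq ⊢
      obtain ⟨⟨⟨c1, c2⟩, c3, c4⟩, hk⟩ := hq
      have h1 : (m+n)^2 ≤ (k:ℤ) := by nlinarith [sq_nonneg (m - n)]
      have h2 : (m-n)^2 ≤ (k:ℤ) := by nlinarith [sq_nonneg (m + n)]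
      have h3 := abs_le_sq (m+n)
      have h4 := abs_le_sq (m-n)
      rw [abs_le] at h3 h4
      exact ⟨⟨⟨⟨by omega, by omega⟩, by omega, by omega⟩, by linear_combination hk⟩,
        ⟨m, by ring⟩⟩
    · rintro ⟨s, t⟩ hp
      simp only [Finset.mem_filter] at hp
      obtain ⟨-, w, hw⟩ := hp
      dsimp only
      simp only [Prod.mk.injEq]
      constructor <;> omega
    · rintro ⟨m, n⟩ hq
      dsimp only
      simp only [Prod.mk.injEq]
      constructor <;> omega
    · rintro ⟨s, t⟩ hp
      simp only [Finset.mem_filter] at hp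
      obtain ⟨-, w, hw⟩ := hp
      dsimp only
      have e1 : (s + t) / 2 = w := by omega
      have e2 : (s - t) / 2 = s - w := by omega
      rw [e1, e2, ← zpow_key a d ha hd s t]
      congr 2 <;> omega
  -- odd part
  · have clean : ∑ p ∈ ((Ik k) ×ˢ (Ik k)).filter (fun p => p.1 ^ 2 + p.2 ^ 2 = (k:ℤ)),
            (if Odd p.1 then (a * d) ^ (2 * p.1) else 0)
              * (if Odd p.2 then (a * d⁻¹) ^ (2 * p.2) else 0)
        = ∑ p ∈ ((Ik k) ×ˢ (Ik k)).filter
              (fun p => (p.1 ^ 2 + p.2 ^ 2 = (k:ℤ)) ∧ Odd p.1 ∧ Odd p.2),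
            (a * d) ^ (2 * p.1) * (a * d⁻¹) ^ (2 * p.2) := by
      rw [eq_comm]
      rw [← Finset.sum_filter_add_sum_filter_not
        (((Ik k) ×ˢ (Ik k)).filter (fun p => p.1 ^ 2 + p.2 ^ 2 = (k:ℤ)))
        (fun p => Odd p.1 ∧ Odd p.2)]
      have z2 : ∑ p ∈ (((Ik k) ×ˢ (Ik k)).filter (fun p => p.1 ^ 2 + p.2 ^ 2 = (k:ℤ))).filter
            (fun p => ¬(Odd p.1 ∧ Odd p.2)),
            (if Odd p.1 then (a * d) ^ (2 * p.1) else 0)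
              * (if Odd p.2 then (a * d⁻¹) ^ (2 * p.2) else 0) = 0 := by
        apply Finset.sum_eq_zero
        intro p hp
        simp only [Finset.mem_filter] at hp
        rcases Classical.em (Odd p.1) with h1 | h1
        · rw [if_neg (fun h2 => hp.2 ⟨h1, h2⟩), mul_zero]
        · rw [if_neg h1, zero_mul]
      have z1 : ∀ pp ∈ (((Ik k) ×ˢ (Ik k)).filter (fun p => p.1 ^ 2 + p.2 ^ 2 = (k:ℤ))).filter
            (fun p => Odd p.1 ∧ Odd p.2),
            (if Odd pp.1 then (a * d) ^ (2 * pp.1) else 0)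
              * (if Odd pp.2 then (a * d⁻¹) ^ (2 * pp.2) else 0)
            = (a * d) ^ (2 * pp.1) * (a * d⁻¹) ^ (2 * pp.2) := by
        intro pp hpp
        simp only [Finset.mem_filter] at hpp
        rw [if_pos hpp.2.1, if_pos hpp.2.2]
      rw [Finset.sum_congr rfl z1, z2, add_zero, Finset.filter_filter]
    rw [clean]
    refine Finset.sum_nbij' (fun p : ℤ × ℤ => (p.1 + p.2, p.1 - p.2))
      (fun q : ℤ × ℤ => ((q.1 + q.2) / 2, (q.1 - q.2) / 2)) ?_ ?_ ?_ ?_ ?_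
    · rintro ⟨s, t⟩ hp
      simp only [Ik, Finset.mem_filter, Finset.mem_product, Finset.mem_Icc,
        Int.not_even_iff_odd] at hp ⊢
      obtain ⟨⟨⟨⟨c1, c2⟩, c3, c4⟩, hk⟩, w, hw⟩ := hp
      have h1 : (s+t)^2 ≤ (k:ℤ) := by nlinarith [sq_nonneg (s - t)]
      have h2 : (s-t)^2 ≤ (k:ℤ) := by nlinarith [sq_nonneg (s + t)]
      have h3 := abs_le_sq (s+t)
      have h4 := abs_le_sq (s-t)
      rw [abs_le] at h3 h4
      refine ⟨⟨⟨by omega, by omega⟩, by omega, by omega⟩, by linear_combination hk,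
        ⟨w, by omega⟩, ⟨w - t, by omega⟩⟩
    · rintro ⟨m, n⟩ hq
      simp only [Ik, Finset.mem_filter, Finset.mem_product, Finset.mem_Icc,
        Int.not_even_iff_odd] at hq ⊢
      obtain ⟨⟨⟨c1, c2⟩, c3, c4⟩, hk, ⟨w1, hw1⟩, ⟨w2, hw2⟩⟩ := hq
      have h1 : (m+n)^2 ≤ 2 * (k:ℤ) := by nlinarith [sq_nonneg (m - n)]
      have h2 : (m-n)^2 ≤ 2 * (k:ℤ) := by nlinarith [sq_nonneg (m + n)]
      have e1 : (m + n) / 2 = w1 + w2 + 1 := by omega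
      have e2 : (m - n) / 2 = w1 - w2 := by omega
      rw [e1, e2]
      have hm : m = 2 * w1 + 1 := by omega
      have hn : n = 2 * w2 + 1 := by omega
      subst hm hn
      have b1 := abs_le_sq (2 * w1 + 1)
      have b2 := abs_le_sq (2 * w2 + 1)
      rw [abs_le] at b1 b2
      exact ⟨⟨⟨⟨by omega, by omega⟩, by omega, by omega⟩, by linear_combination hk⟩,
        ⟨w1, by ring⟩⟩
    · rintro ⟨s, t⟩ hp
      dsimp only
      simp only [Prod.mk.injEq]
      constructor <;> omega
    · rintro ⟨m, n⟩ hq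
      simp only [Finset.mem_filter] at hq
      obtain ⟨-, -, ⟨w1, hw1⟩, ⟨w2, hw2⟩⟩ := hq
      dsimp only
      simp only [Prod.mk.injEq]
      constructor <;> omega
    · rintro ⟨s, t⟩ hp
      dsimp only
      exact (zpow_key a d ha hd s t).symm


lemma exists_inv_sum (x : ℂ) : ∃ a : ℂ, a ≠ 0 ∧ a + a⁻¹ = x := by
  obtain ⟨s, hs⟩ : ∃ s : ℂ, s ^ 2 = x ^ 2 - 4 :=
    IsAlgClosed.exists_pow_nat_eq (x ^ 2 - 4) two_pos
  have hmul : ((x + s) / 2) * ((x - s) / 2) = 1 := by linear_combination (-1/4 : ℂ) * hs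
  refine ⟨(x + s) / 2, left_ne_zero_of_mul_eq_one hmul, ?_⟩
  rw [inv_eq_of_mul_eq_one_right hmul]
  ring

lemma core (a d : ℂ) (ha : a ≠ 0) (hd : d ≠ 0) :
    (1 + 2 * mkSum (fun n => 2 * n ^ 2) fun n =>
        (Polynomial.Chebyshev.T ℂ (4 * (n : ℤ))).eval ((a + a⁻¹) / 2)) *
      (1 + 2 * mkSum (fun n => 2 * n ^ 2) fun n =>
        (Polynomial.Chebyshev.T ℂ (4 * (n : ℤ))).eval ((d + d⁻¹) / 2)) =
    (1 + 2 * mkSum (fun n => 4 * n ^ 2) fun n =>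
        (Polynomial.Chebyshev.T ℂ (4 * (n : ℤ))).eval ((a * d + (a * d)⁻¹) / 2)) *
      (1 + 2 * mkSum (fun n => 4 * n ^ 2) fun n =>
        (Polynomial.Chebyshev.T ℂ (4 * (n : ℤ))).eval ((a * d⁻¹ + (a * d⁻¹)⁻¹) / 2)) +
    4 * PowerSeries.X ^ 2 *
      ((mkSum (fun n => 4 * n ^ 2 - 4 * n) fun n =>
          (Polynomial.Chebyshev.T ℂ (4 * (n : ℤ) - 2)).eval ((a * d + (a * d)⁻¹) / 2)) *
        (mkSum (fun n => 4 * n ^ 2 - 4 * n) fun n =>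
          (Polynomial.Chebyshev.T ℂ (4 * (n : ℤ) - 2)).eval ((a * d⁻¹ + (a * d⁻¹)⁻¹) / 2))) := by
  have hb : a * d ≠ 0 := mul_ne_zero ha hd
  have hc : a * d⁻¹ ≠ 0 := mul_ne_zero ha (inv_ne_zero hd)
  have hX : (4 : PowerSeries ℂ) * PowerSeries.X ^ 2 *
      ((mkSum (fun n => 4 * n ^ 2 - 4 * n) fun n =>
          (Polynomial.Chebyshev.T ℂ (4 * (n : ℤ) - 2)).eval ((a * d + (a * d)⁻¹) / 2)) *
        (mkSum (fun n => 4 * n ^ 2 - 4 * n) fun n =>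
          (Polynomial.Chebyshev.T ℂ (4 * (n : ℤ) - 2)).eval ((a * d⁻¹ + (a * d⁻¹)⁻¹) / 2)))
      = (2 * PowerSeries.X * mkSum (fun n => 4 * n ^ 2 - 4 * n) (fun n =>
          (Polynomial.Chebyshev.T ℂ (4 * (n : ℤ) - 2)).eval ((a * d + (a * d)⁻¹) / 2)))
        * (2 * PowerSeries.X * mkSum (fun n => 4 * n ^ 2 - 4 * n) (fun n =>
          (Polynomial.Chebyshev.T ℂ (4 * (n : ℤ) - 2)).eval ((a * d⁻¹ + (a * d⁻¹)⁻¹) / 2))) := by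
    ring
  rw [hX]
  apply PowerSeries.ext
  intro k
  rw [map_add]
  rw [coeff_mul_conv _ _ (fun m => 2 * m ^ 2) (fun m => 2 * m ^ 2)
      (fun m => a ^ (4 * m)) (fun m => d ^ (4 * m))
      (fun m => by nlinarith [abs_le_sq m, abs_nonneg m])
      (fun m => by nlinarith [abs_le_sq m, abs_nonneg m])
      (fun i => by
        rw [coeff_theta 2 (by norm_num) a ha i]
        simp only [Nat.cast_ofNat])
      (fun i => by
        rw [coeff_theta 2 (by norm_num) d hd i]
        simp only [Nat.cast_ofNat])
      k]
  rw [coeff_mul_conv _ _ (fun m => 4 * m ^ 2) (fun m => 4 * m ^ 2)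
      (fun m => (a * d) ^ (4 * m)) (fun m => (a * d⁻¹) ^ (4 * m))
      (fun m => by nlinarith [abs_le_sq m, abs_nonneg m])
      (fun m => by nlinarith [abs_le_sq m, abs_nonneg m])
      (fun i => by
        rw [coeff_theta 4 (by norm_num) (a * d) hb i]
        simp only [Nat.cast_ofNat])
      (fun i => by
        rw [coeff_theta 4 (by norm_num) (a * d⁻¹) hc i]
        simp only [Nat.cast_ofNat])
      k]
  rw [coeff_mul_conv _ _ (fun m => m ^ 2) (fun m => m ^ 2)
      (fun m => if Odd m then (a * d) ^ (2 * m) else 0)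
      (fun m => if Odd m then (a * d⁻¹) ^ (2 * m) else 0)
      (fun m => abs_le_sq m) (fun m => abs_le_sq m)
      (fun i => coeff_RR (a * d) hb i)
      (fun i => coeff_RR (a * d⁻¹) hc i)
      k]
  exact master a d ha hd k

/-- If complex numbers `x, y, u, v` satisfy `u + v = xy` and `uv = x² + y² - 4`, then in `ℂ[[q]]`:
`(1 + 2∑ T_{4n}(x/2) q^{2n²})(1 + 2∑ T_{4n}(y/2) q^{2n²})
  = (1 + 2∑ T_{4n}(u/2) q^{4n²})(1 + 2∑ T_{4n}(v/2) q^{4n²})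
    + 4q² (∑ T_{4n-2}(u/2) q^{4n²-4n})(∑ T_{4n-2}(v/2) q^{4n²-4n})`. -/
theorem cheby_xyuv_even (x y u v : ℂ) (h1 : u + v = x * y) (h2 : u * v = x ^ 2 + y ^ 2 - 4) :
    (1 + 2 * mkSum (fun n => 2 * n ^ 2) fun n =>
        (Polynomial.Chebyshev.T ℂ (4 * (n : ℤ))).eval (x / 2)) *
      (1 + 2 * mkSum (fun n => 2 * n ^ 2) fun n =>
        (Polynomial.Chebyshev.T ℂ (4 * (n : ℤ))).eval (y / 2)) =
    (1 + 2 * mkSum (fun n => 4 * n ^ 2) fun n =>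
        (Polynomial.Chebyshev.T ℂ (4 * (n : ℤ))).eval (u / 2)) *
      (1 + 2 * mkSum (fun n => 4 * n ^ 2) fun n =>
        (Polynomial.Chebyshev.T ℂ (4 * (n : ℤ))).eval (v / 2)) +
    4 * PowerSeries.X ^ 2 *
      ((mkSum (fun n => 4 * n ^ 2 - 4 * n) fun n =>
          (Polynomial.Chebyshev.T ℂ (4 * (n : ℤ) - 2)).eval (u / 2)) *
        (mkSum (fun n => 4 * n ^ 2 - 4 * n) fun n =>
          (Polynomial.Chebyshev.T ℂ (4 * (n : ℤ) - 2)).eval (v / 2))) := by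
  obtain ⟨a, ha, hax⟩ := exists_inv_sum x
  obtain ⟨d, hd, hdy⟩ := exists_inv_sum y
  have hb : a * d ≠ 0 := mul_ne_zero ha hd
  have hd' : d⁻¹ ≠ 0 := inv_ne_zero hd
  have hc : a * d⁻¹ ≠ 0 := mul_ne_zero ha hd'
  have hsum : (a * d + (a * d)⁻¹) + (a * d⁻¹ + (a * d⁻¹)⁻¹) = u + v := by
    rw [h1, ← hax, ← hdy]
    field_simp
    ring
  have hpr : (a * d + (a * d)⁻¹) * (a * d⁻¹ + (a * d⁻¹)⁻¹) = u * v := by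
    rw [h2, ← hax, ← hdy]
    field_simp
    ring
  have hroot : (u - (a * d + (a * d)⁻¹)) * (u - (a * d⁻¹ + (a * d⁻¹)⁻¹)) = 0 := by
    linear_combination (-u) * hsum + hpr
  rcases mul_eq_zero.mp hroot with h | h
  · have hu : u = a * d + (a * d)⁻¹ := by linear_combination h
    have hv : v = a * d⁻¹ + (a * d⁻¹)⁻¹ := by linear_combination (-1 : ℂ) * hsum - hu
    rw [← hax, ← hdy, hu, hv]
    exact core a d ha hd
  · have hu : u = a * d⁻¹ + (a * d⁻¹)⁻¹ := by linear_combination h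
    have hv : v = a * d + (a * d)⁻¹ := by linear_combination (-1 : ℂ) * hsum - hu
    rw [← hax, ← hdy, hu, hv]
    rw [core a d ha hd]
    ring
end

section
/- Let x, y, u, v be complex numbers satisfying u + v = xy and uv = x² + y² − 4. Then in ℂ[[q]]: 2·(∑_{n≥1} T_{4n−2}(x/2) q^{2n²−2n})·(∑_{n≥1} T_{4n−2}(y/2) q^{2n²−2n}) = (1 + 2∑_{n≥1} T_{4n}(u/2) q^{4n²})·(∑_{n≥1} T_{4n−2}(v/2) q^{4n²−4n}) + (1 + 2∑_{n≥1} T_{4n}(v/2) q^{4n²})·(∑_{n≥1} T_{4n−2}(u/2) q^{4n²−4n}). -/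
open Finset PowerSeries Complex


lemma sq_lin (b : ℕ) : 2*b ≤ b^2 + 1 := by
  rcases b with _ | c
  · omega
  · have : (c+1)^2 = c^2 + 2*c + 1 := by ring
    omega

lemma le_sq (b : ℕ) : b ≤ b^2 := Nat.le_self_pow (by norm_num) _

lemma mkSum_coeff (e : ℕ → ℕ) (c : ℕ → ℂ) (he : ∀ n, 1 ≤ n → n < e n + 2)
    (j N : ℕ) (hN : j + 2 ≤ N) :
    PowerSeries.coeff j (mkSum e c) = ∑ n ∈ range N, if 1 ≤ n ∧ e n = j then c n else 0 := by
  rw [mkSum, coeff_mk]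
  refine Finset.sum_subset (Finset.range_subset_range.2 hN) fun m _ hm => ?_
  rw [Finset.mem_range] at hm
  split_ifs with h
  · exact absurd (he m h.1) (by omega)
  · rfl

lemma collapse (e1 e2 : ℕ → ℕ) (c1 c2 : ℕ → ℂ) (k m n : ℕ) :
    ∑ p ∈ Finset.HasAntidiagonal.antidiagonal k,
      (if 1 ≤ m ∧ e1 m = p.1 then c1 m else 0) * (if 1 ≤ n ∧ e2 n = p.2 then c2 n else 0)
    = if (1 ≤ m ∧ 1 ≤ n) ∧ e1 m + e2 n = k then c1 m * c2 n else 0 := by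
  by_cases H : (1 ≤ m ∧ 1 ≤ n) ∧ e1 m + e2 n = k
  · rw [if_pos H, Finset.sum_eq_single_of_mem (e1 m, e2 n) (Finset.HasAntidiagonal.mem_antidiagonal.2 H.2)]
    · rw [if_pos ⟨H.1.1, rfl⟩, if_pos ⟨H.1.2, rfl⟩]
    · intro p _ hne
      by_cases h1 : e1 m = p.1
      · by_cases h2 : e2 n = p.2
        · exact absurd (Prod.ext h1.symm h2.symm) hne
        · rw [if_neg (show ¬(1 ≤ n ∧ e2 n = p.2) from fun h => h2 h.2), mul_zero]
      · rw [if_neg (show ¬(1 ≤ m ∧ e1 m = p.1) from fun h => h1 h.2), zero_mul]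
  · rw [if_neg H]
    refine Finset.sum_eq_zero fun p hp => ?_
    have hpk := Finset.HasAntidiagonal.mem_antidiagonal.1 hp
    split_ifs with h1 h2
    · exact absurd ⟨⟨h1.1, h2.1⟩, by rw [h1.2, h2.2]; exact hpk⟩ H
    all_goals simp

lemma coeff_mul_mkSum (e1 e2 : ℕ → ℕ) (c1 c2 : ℕ → ℂ)
    (he1 : ∀ n, 1 ≤ n → n < e1 n + 2) (he2 : ∀ n, 1 ≤ n → n < e2 n + 2) (k : ℕ) :
    PowerSeries.coeff k (mkSum e1 c1 * mkSum e2 c2) =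
    ∑ z ∈ range (k+2) ×ˢ range (k+2),
      if (1 ≤ z.1 ∧ 1 ≤ z.2) ∧ e1 z.1 + e2 z.2 = k then c1 z.1 * c2 z.2 else 0 := by
  rw [PowerSeries.coeff_mul]
  calc ∑ p ∈ Finset.HasAntidiagonal.antidiagonal k,
        PowerSeries.coeff p.1 (mkSum e1 c1) * PowerSeries.coeff p.2 (mkSum e2 c2)
      = ∑ p ∈ Finset.HasAntidiagonal.antidiagonal k, ∑ m ∈ range (k+2), ∑ n ∈ range (k+2),
          (if 1 ≤ m ∧ e1 m = p.1 then c1 m else 0) * (if 1 ≤ n ∧ e2 n = p.2 then c2 n else 0) := by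
        refine Finset.sum_congr rfl fun p hp => ?_
        have hpk := Finset.HasAntidiagonal.mem_antidiagonal.1 hp
        rw [mkSum_coeff e1 c1 he1 p.1 (k+2) (by omega),
          mkSum_coeff e2 c2 he2 p.2 (k+2) (by omega), Finset.sum_mul_sum]
    _ = ∑ m ∈ range (k+2), ∑ n ∈ range (k+2), ∑ p ∈ Finset.HasAntidiagonal.antidiagonal k,
          (if 1 ≤ m ∧ e1 m = p.1 then c1 m else 0) * (if 1 ≤ n ∧ e2 n = p.2 then c2 n else 0) := by
        rw [Finset.sum_comm]
        exact Finset.sum_congr rfl fun m _ => Finset.sum_comm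
    _ = ∑ m ∈ range (k+2), ∑ n ∈ range (k+2),
          (if (1 ≤ m ∧ 1 ≤ n) ∧ e1 m + e2 n = k then c1 m * c2 n else 0) := by
        exact Finset.sum_congr rfl fun m _ => Finset.sum_congr rfl fun n _ =>
          collapse e1 e2 c1 c2 k m n
    _ = _ := (Finset.sum_product' ..).symm

open Finset

lemma le_sq' (b : ℕ) : b ≤ b^2 := Nat.le_self_pow (by norm_num) _

lemma sq_lin' (b : ℕ) : 2*b ≤ b^2 + 1 := by
  rcases b with _ | c
  · omega
  · have : (c+1)^2 = c^2 + 2*c + 1 := by ring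
    omega

/-- exponent identity for the map (a,b) ↦ (a+b, a-b+1), b ≤ a -/
lemma quad1 (a b m n k : ℕ) (hm : a + b = m) (hn : n + b = a + 1) (hb : 1 ≤ b) :
    ((2*m^2 - 2*m) + (2*n^2 - 2*n) = k) ↔ (4*a^2 + (4*b^2 - 4*b) = k) := by
  subst hm
  have h1 : (a+b)^2 = a^2 + 2*(a*b) + b^2 := by ring
  have h2 : (n+b)^2 = n^2 + 2*(n*b) + b^2 := by ring
  have h3 : (n+b)^2 = a^2 + 2*a + 1 := by rw [hn]; ring
  have h4 : (n+b)*b = n*b + b^2 := by ring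
  have h4' : (n+b)*b = a*b + b := by rw [hn]; ring
  have h5 := le_sq' (a+b)
  have h6 := le_sq' n
  have h7 := le_sq' b
  have h8 := le_sq' a
  omega

/-- exponent identity for the map (a,b) ↦ (a+b, b-a), a < b -/
lemma quad2 (a b m n k : ℕ) (hm : a + b = m) (hn : n + a = b) (ha : 1 ≤ a) :
    ((2*m^2 - 2*m) + (2*n^2 - 2*n) = k) ↔ (4*a^2 + (4*b^2 - 4*b) = k) := by
  subst hm
  have h1 : (a+b)^2 = a^2 + 2*(a*b) + b^2 := by ring
  have h2 : (n+a)^2 = n^2 + 2*(n*a) + a^2 := by ring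
  have h3 : (n+a)^2 = b^2 := by rw [hn]
  have h4 : (n+a)*a = n*a + a^2 := by ring
  have h4' : (n+a)*a = a*b := by rw [hn]; ring
  have h5 := le_sq' (a+b)
  have h6 := le_sq' n
  have h7 := le_sq' b
  have h8 := le_sq' a
  omega

/-- bound: from the Q-exponent equation, a + b ≤ k + 1 -/
lemma boundQ (a b k : ℕ) (ha : 1 ≤ a) (hb : 1 ≤ b) (hk : 4*a^2 + (4*b^2 - 4*b) = k) :
    a + b < k + 2 := by
  have h5 := le_sq' a
  have h7 := sq_lin' b
  omega

lemma shape1 (k : ℕ) (f : ℤ → ℤ → ℂ) :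
    (∑ z ∈ range (k+2) ×ˢ range (k+2),
      if ((1 ≤ z.1 ∧ 1 ≤ z.2) ∧ (2*z.1^2 - 2*z.1) + (2*z.2^2 - 2*z.2) = k)
          ∧ z.2 < z.1 ∧ (z.1 + z.2) % 2 = 1
        then f z.1 z.2 else 0)
  = ∑ z ∈ range (k+2) ×ˢ range (k+2),
      if ((1 ≤ z.1 ∧ 1 ≤ z.2) ∧ 4*z.1^2 + (4*z.2^2 - 4*z.2) = k) ∧ z.2 ≤ z.1
        then f ((z.1:ℤ) + (z.2:ℤ)) ((z.1:ℤ) - (z.2:ℤ) + 1) else 0 := by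
  rw [← Finset.sum_filter, ← Finset.sum_filter]
  refine Finset.sum_nbij' (i := fun z => ((z.1 + z.2 - 1)/2, (z.1 - z.2 + 1)/2))
    (j := fun z => (z.1 + z.2, z.1 - z.2 + 1)) ?_ ?_ ?_ ?_ ?_
  · rintro ⟨m, n⟩ hz
    simp only [Finset.mem_filter, Finset.mem_product, Finset.mem_range] at hz ⊢
    obtain ⟨⟨hmr, hnr⟩, ⟨⟨hm1, hn1⟩, hk⟩, hlt, hpar⟩ := hz
    obtain ⟨a, ha⟩ : ∃ a, (m + n - 1)/2 = a := ⟨_, rfl⟩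
    obtain ⟨b, hb⟩ : ∃ b, (m - n + 1)/2 = b := ⟨_, rfl⟩
    rw [ha, hb]
    have hab : a + b = m := by omega
    have hnb : n + b = a + 1 := by omega
    have hb1 : 1 ≤ b := by omega
    exact ⟨⟨by omega, by omega⟩, ⟨⟨by omega, by omega⟩, (quad1 a b m n k hab hnb hb1).1 hk⟩, by omega⟩
  · rintro ⟨a, b⟩ hz
    simp only [Finset.mem_filter, Finset.mem_product, Finset.mem_range] at hz ⊢
    obtain ⟨⟨har, hbr⟩, ⟨⟨ha1, hb1⟩, hk⟩, hba⟩ := hz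
    have hbd := boundQ a b k ha1 hb1 hk
    refine ⟨⟨by omega, by omega⟩, ⟨⟨by omega, by omega⟩, ?_⟩, by omega, by omega⟩
    exact (quad1 a b (a+b) (a-b+1) k rfl (by omega) hb1).2 hk
  · rintro ⟨m, n⟩ hz
    simp only [Finset.mem_filter, Finset.mem_product, Finset.mem_range] at hz
    have : (m + n - 1)/2 + (m - n + 1)/2 = m ∧ (m + n - 1)/2 - (m - n + 1)/2 + 1 = n := by omega
    simp only [Prod.mk.injEq]
    omega
  · rintro ⟨a, b⟩ hz
    simp only [Finset.mem_filter, Finset.mem_product, Finset.mem_range] at hz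
    simp only [Prod.mk.injEq]
    omega
  · rintro ⟨m, n⟩ hz
    simp only [Finset.mem_filter, Finset.mem_product, Finset.mem_range] at hz
    have h1 : ((((m + n - 1)/2 : ℕ) : ℤ) + (((m - n + 1)/2 : ℕ) : ℤ)) = (m : ℤ) := by omega
    have h2 : ((((m + n - 1)/2 : ℕ) : ℤ) - (((m - n + 1)/2 : ℕ) : ℤ) + 1) = (n : ℤ) := by omega
    rw [h1, h2]

lemma shape2 (k : ℕ) (f : ℤ → ℤ → ℂ) :
    (∑ z ∈ range (k+2) ×ˢ range (k+2),
      if ((1 ≤ z.1 ∧ 1 ≤ z.2) ∧ (2*z.1^2 - 2*z.1) + (2*z.2^2 - 2*z.2) = k)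
          ∧ z.2 < z.1 ∧ (z.1 + z.2) % 2 = 0
        then f z.1 z.2 else 0)
  = ∑ z ∈ range (k+2) ×ˢ range (k+2),
      if ((1 ≤ z.1 ∧ 1 ≤ z.2) ∧ 4*z.1^2 + (4*z.2^2 - 4*z.2) = k) ∧ z.1 < z.2
        then f ((z.1:ℤ) + (z.2:ℤ)) ((z.2:ℤ) - (z.1:ℤ)) else 0 := by
  rw [← Finset.sum_filter, ← Finset.sum_filter]
  refine Finset.sum_nbij' (i := fun z => ((z.1 - z.2)/2, (z.1 + z.2)/2))
    (j := fun z => (z.1 + z.2, z.2 - z.1)) ?_ ?_ ?_ ?_ ?_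
  · rintro ⟨m, n⟩ hz
    simp only [Finset.mem_filter, Finset.mem_product, Finset.mem_range] at hz ⊢
    obtain ⟨⟨hmr, hnr⟩, ⟨⟨hm1, hn1⟩, hk⟩, hlt, hpar⟩ := hz
    obtain ⟨a, ha⟩ : ∃ a, (m - n)/2 = a := ⟨_, rfl⟩
    obtain ⟨b, hb⟩ : ∃ b, (m + n)/2 = b := ⟨_, rfl⟩
    rw [ha, hb]
    have hab : a + b = m := by omega
    have hnb : n + a = b := by omega
    have ha1 : 1 ≤ a := by omega
    exact ⟨⟨by omega, by omega⟩, ⟨⟨by omega, by omega⟩, (quad2 a b m n k hab hnb ha1).1 hk⟩, by omega⟩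
  · rintro ⟨a, b⟩ hz
    simp only [Finset.mem_filter, Finset.mem_product, Finset.mem_range] at hz ⊢
    obtain ⟨⟨har, hbr⟩, ⟨⟨ha1, hb1⟩, hk⟩, hab⟩ := hz
    have hbd := boundQ a b k ha1 hb1 hk
    refine ⟨⟨by omega, by omega⟩, ⟨⟨by omega, by omega⟩, ?_⟩, by omega, by omega⟩
    exact (quad2 a b (a+b) (b-a) k rfl (by omega) ha1).2 hk
  · rintro ⟨m, n⟩ hz
    simp only [Finset.mem_filter, Finset.mem_product, Finset.mem_range] at hz
    simp only [Prod.mk.injEq]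
    omega
  · rintro ⟨a, b⟩ hz
    simp only [Finset.mem_filter, Finset.mem_product, Finset.mem_range] at hz
    simp only [Prod.mk.injEq]
    omega
  · rintro ⟨m, n⟩ hz
    simp only [Finset.mem_filter, Finset.mem_product, Finset.mem_range] at hz
    have h1 : ((((m - n)/2 : ℕ) : ℤ) + (((m + n)/2 : ℕ) : ℤ)) = (m : ℤ) := by omega
    have h2 : ((((m + n)/2 : ℕ) : ℤ) - (((m - n)/2 : ℕ) : ℤ)) = (n : ℤ) := by omega
    rw [h1, h2]

lemma diagshape (k : ℕ) (f : ℤ → ℤ → ℂ) :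
    (∑ z ∈ range (k+2) ×ˢ range (k+2),
      if ((1 ≤ z.1 ∧ 1 ≤ z.2) ∧ (2*z.1^2 - 2*z.1) + (2*z.2^2 - 2*z.2) = k) ∧ z.1 = z.2
        then f z.1 z.2 else 0)
  = ∑ b ∈ range (k+2), if 1 ≤ b ∧ 4*b^2 - 4*b = k then f b b else 0 := by
  rw [← Finset.sum_filter, ← Finset.sum_filter]
  refine Finset.sum_nbij' (i := fun z => z.1) (j := fun b => (b, b)) ?_ ?_ ?_ ?_ ?_
  · rintro ⟨m, n⟩ hz
    simp only [Finset.mem_filter, Finset.mem_product, Finset.mem_range] at hz ⊢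
    obtain ⟨⟨hmr, hnr⟩, ⟨⟨hm1, hn1⟩, hk⟩, heq⟩ := hz
    subst heq
    have := le_sq' m
    exact ⟨hmr, hm1, by omega⟩
  · rintro b hz
    simp only [Finset.mem_filter, Finset.mem_product, Finset.mem_range] at hz ⊢
    obtain ⟨hbr, hb1, hk⟩ := hz
    have := le_sq' b
    exact ⟨⟨hbr, hbr⟩, ⟨⟨hb1, hb1⟩, by omega⟩, trivial⟩
  · rintro ⟨m, n⟩ hz
    simp only [Finset.mem_filter, Finset.mem_product, Finset.mem_range] at hz
    obtain ⟨-, -, heq⟩ := hz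
    subst heq
    rfl
  · rintro b _
    rfl
  · rintro ⟨m, n⟩ hz
    simp only [Finset.mem_filter, Finset.mem_product, Finset.mem_range] at hz
    obtain ⟨-, -, heq⟩ := hz
    rw [heq]

lemma swap_square {M : Type*} [AddCommMonoid M] (s : Finset ℕ) (h : ℕ → ℕ → M) :
    ∑ z ∈ s ×ˢ s, h z.1 z.2 = ∑ z ∈ s ×ˢ s, h z.2 z.1 := by
  rw [Finset.sum_product', Finset.sum_comm, ← Finset.sum_product']


lemma ite_add_zero' (p : Prop) [Decidable p] (x y : ℂ) :
    (if p then x + y else 0) = (if p then x else 0) + (if p then y else 0) := by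
  split_ifs <;> simp

lemma ite_split5 (p : Prop) [Decidable p] (m n : ℕ) (w : ℂ) :
    (if p then w else 0) =
      (if p ∧ n < m ∧ (m + n) % 2 = 1 then w else 0)
    + (if p ∧ n < m ∧ (m + n) % 2 = 0 then w else 0)
    + (if p ∧ m < n ∧ (m + n) % 2 = 1 then w else 0)
    + (if p ∧ m < n ∧ (m + n) % 2 = 0 then w else 0)
    + (if p ∧ m = n then w else 0) := by
  by_cases hp : p
  · simp only [hp, true_and]
    split_ifs <;> try (exfalso; omega)
    all_goals simp_all
  · simp [hp]

lemma ite_split2 (p : Prop) [Decidable p] (m n : ℕ) (w : ℂ) :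
    (if p then w else 0) =
      (if p ∧ n ≤ m then w else 0) + (if p ∧ m < n then w else 0) := by
  by_cases hp : p
  · simp only [hp, true_and]
    split_ifs <;> try (exfalso; omega)
    all_goals simp_all
  · simp [hp]

lemma split10 (p : Prop) [Decidable p] (m n : ℕ) (w1 w2 : ℂ) :
    (if p then w1 + w2 else 0) =
      ((if p ∧ n < m ∧ (m + n) % 2 = 1 then w1 else 0)
       + (if p ∧ n < m ∧ (m + n) % 2 = 0 then w1 else 0)
       + (if p ∧ m < n ∧ (m + n) % 2 = 1 then w1 else 0)
       + (if p ∧ m < n ∧ (m + n) % 2 = 0 then w1 else 0)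
       + (if p ∧ m = n then w1 else 0))
    + ((if p ∧ n < m ∧ (m + n) % 2 = 1 then w2 else 0)
       + (if p ∧ n < m ∧ (m + n) % 2 = 0 then w2 else 0)
       + (if p ∧ m < n ∧ (m + n) % 2 = 1 then w2 else 0)
       + (if p ∧ m < n ∧ (m + n) % 2 = 0 then w2 else 0)
       + (if p ∧ m = n then w2 else 0)) := by
  refine (ite_add_zero' p w1 w2).trans ?_
  rw [ite_split5 p m n w1, ite_split5 p m n w2]

lemma split4 (p : Prop) [Decidable p] (m n : ℕ) (w1 w2 : ℂ) :
    (if p then w1 + w2 else 0) =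
      ((if p ∧ n ≤ m then w1 else 0) + (if p ∧ m < n then w1 else 0))
    + ((if p ∧ n ≤ m then w2 else 0) + (if p ∧ m < n then w2 else 0)) := by
  refine (ite_add_zero' p w1 w2).trans ?_
  rw [ite_split2 p m n w1, ite_split2 p m n w2]

lemma guard_swap (k r m n : ℕ) :
    (((1 ≤ n ∧ 1 ≤ m) ∧ (2*n^2 - 2*n) + (2*m^2 - 2*m) = k) ∧ n < m ∧ (n + m) % 2 = r)
    ↔ (((1 ≤ m ∧ 1 ≤ n) ∧ (2*m^2 - 2*m) + (2*n^2 - 2*n) = k) ∧ n < m ∧ (m + n) % 2 = r) := by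
  constructor <;> (rintro ⟨⟨⟨u1, u2⟩, u3⟩, u4, u5⟩; exact ⟨⟨⟨u2, u1⟩, by omega⟩, u4, by omega⟩)


lemma combinat (k : ℕ) (G : ℤ → ℤ → ℂ) (hG : ∀ p q : ℤ, G (-p) (-q) = G p q)
    (shape1 : ∀ f : ℤ → ℤ → ℂ,
      (∑ z ∈ range (k+2) ×ˢ range (k+2), if ((1 ≤ z.1 ∧ 1 ≤ z.2) ∧ (2*z.1^2 - 2*z.1) + (2*z.2^2 - 2*z.2) = k) ∧ z.2 < z.1 ∧ (z.1 + z.2) % 2 = 1 then f z.1 z.2 else 0)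
      = ∑ z ∈ range (k+2) ×ˢ range (k+2), if ((1 ≤ z.1 ∧ 1 ≤ z.2) ∧ 4*z.1^2 + (4*z.2^2 - 4*z.2) = k) ∧ z.2 ≤ z.1 then f ((z.1:ℤ) + (z.2:ℤ)) ((z.1:ℤ) - (z.2:ℤ) + 1) else 0)
    (shape2 : ∀ f : ℤ → ℤ → ℂ,
      (∑ z ∈ range (k+2) ×ˢ range (k+2), if ((1 ≤ z.1 ∧ 1 ≤ z.2) ∧ (2*z.1^2 - 2*z.1) + (2*z.2^2 - 2*z.2) = k) ∧ z.2 < z.1 ∧ (z.1 + z.2) % 2 = 0 then f z.1 z.2 else 0)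
      = ∑ z ∈ range (k+2) ×ˢ range (k+2), if ((1 ≤ z.1 ∧ 1 ≤ z.2) ∧ 4*z.1^2 + (4*z.2^2 - 4*z.2) = k) ∧ z.1 < z.2 then f ((z.1:ℤ) + (z.2:ℤ)) ((z.2:ℤ) - (z.1:ℤ)) else 0)
    (diagshape : ∀ f : ℤ → ℤ → ℂ,
      (∑ z ∈ range (k+2) ×ˢ range (k+2), if ((1 ≤ z.1 ∧ 1 ≤ z.2) ∧ (2*z.1^2 - 2*z.1) + (2*z.2^2 - 2*z.2) = k) ∧ z.1 = z.2 then f z.1 z.2 else 0)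
      = ∑ b ∈ range (k+2), if (1 ≤ b ∧ 4*b^2 - 4*b = k) then f b b else 0)
    (swap_square : ∀ h : ℕ → ℕ → ℂ,
      (∑ z ∈ range (k+2) ×ˢ range (k+2), h z.1 z.2) = ∑ z ∈ range (k+2) ×ˢ range (k+2), h z.2 z.1) :
    (∑ z ∈ range (k+2) ×ˢ range (k+2), if ((1 ≤ z.1 ∧ 1 ≤ z.2) ∧ (2*z.1^2 - 2*z.1) + (2*z.2^2 - 2*z.2) = k) then G (4*(z.1:ℤ) - 2) (4*(z.2:ℤ) - 2) + G (4*(z.1:ℤ) - 2) (2 - 4*(z.2:ℤ)) else 0)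
  = (∑ b ∈ range (k+2), if (1 ≤ b ∧ 4*b^2 - 4*b = k) then G (4*(b:ℤ) - 2) (2 - 4*(b:ℤ)) else 0) + (∑ b ∈ range (k+2), if (1 ≤ b ∧ 4*b^2 - 4*b = k) then G (4*(b:ℤ) - 2) (4*(b:ℤ) - 2) else 0)
  + (∑ z ∈ range (k+2) ×ˢ range (k+2), if ((1 ≤ z.1 ∧ 1 ≤ z.2) ∧ 4*z.1^2 + (4*z.2^2 - 4*z.2) = k) then G (4*(z.1:ℤ) + 4*(z.2:ℤ) - 2) (4*(z.1:ℤ) - 4*(z.2:ℤ) + 2) + G (4*(z.1:ℤ) - 4*(z.2:ℤ) + 2) (4*(z.1:ℤ) + 4*(z.2:ℤ) - 2) else 0)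
  + (∑ z ∈ range (k+2) ×ˢ range (k+2), if ((1 ≤ z.1 ∧ 1 ≤ z.2) ∧ 4*z.1^2 + (4*z.2^2 - 4*z.2) = k) then G (4*(z.1:ℤ) + 4*(z.2:ℤ) - 2) (4*(z.2:ℤ) - 4*(z.1:ℤ) - 2) + G (4*(z.1:ℤ) - 4*(z.2:ℤ) + 2) (2 - 4*(z.1:ℤ) - 4*(z.2:ℤ)) else 0) := by
  have M1 : (∑ z ∈ range (k+2) ×ˢ range (k+2), if ((1 ≤ z.1 ∧ 1 ≤ z.2) ∧ (2*z.1^2 - 2*z.1) + (2*z.2^2 - 2*z.2) = k) ∧ z.2 < z.1 ∧ (z.1 + z.2) % 2 = 1 then G (4*(z.1:ℤ) - 2) (4*(z.2:ℤ) - 2) else 0) = (∑ z ∈ range (k+2) ×ˢ range (k+2), if ((1 ≤ z.1 ∧ 1 ≤ z.2) ∧ 4*z.1^2 + (4*z.2^2 - 4*z.2) = k) ∧ z.2 ≤ z.1 then G (4*(z.1:ℤ) + 4*(z.2:ℤ) - 2) (4*(z.1:ℤ) - 4*(z.2:ℤ) + 2) else 0) := by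
    refine (shape1 (fun p q => G (4*p - 2) (4*q - 2))).trans ?_
    refine Finset.sum_congr rfl fun z _ => ?_
    split_ifs with h
    · congr 1 <;> push_cast <;> ring
    · rfl
  have M3 : (∑ z ∈ range (k+2) ×ˢ range (k+2), if ((1 ≤ z.1 ∧ 1 ≤ z.2) ∧ (2*z.1^2 - 2*z.1) + (2*z.2^2 - 2*z.2) = k) ∧ z.2 < z.1 ∧ (z.1 + z.2) % 2 = 0 then G (4*(z.1:ℤ) - 2) (4*(z.2:ℤ) - 2) else 0) = (∑ z ∈ range (k+2) ×ˢ range (k+2), if ((1 ≤ z.1 ∧ 1 ≤ z.2) ∧ 4*z.1^2 + (4*z.2^2 - 4*z.2) = k) ∧ z.1 < z.2 then G (4*(z.1:ℤ) + 4*(z.2:ℤ) - 2) (4*(z.2:ℤ) - 4*(z.1:ℤ) - 2) else 0) := by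
    refine (shape2 (fun p q => G (4*p - 2) (4*q - 2))).trans ?_
    refine Finset.sum_congr rfl fun z _ => ?_
    split_ifs with h
    · congr 1 <;> push_cast <;> ring
    · rfl
  have M2 : (∑ z ∈ range (k+2) ×ˢ range (k+2), if ((1 ≤ z.1 ∧ 1 ≤ z.2) ∧ (2*z.1^2 - 2*z.1) + (2*z.2^2 - 2*z.2) = k) ∧ z.1 < z.2 ∧ (z.1 + z.2) % 2 = 1 then G (4*(z.1:ℤ) - 2) (4*(z.2:ℤ) - 2) else 0) = (∑ z ∈ range (k+2) ×ˢ range (k+2), if ((1 ≤ z.1 ∧ 1 ≤ z.2) ∧ 4*z.1^2 + (4*z.2^2 - 4*z.2) = k) ∧ z.2 ≤ z.1 then G (4*(z.1:ℤ) - 4*(z.2:ℤ) + 2) (4*(z.1:ℤ) + 4*(z.2:ℤ) - 2) else 0) := by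
    refine (swap_square (fun m n => if ((1 ≤ m ∧ 1 ≤ n) ∧ (2*m^2 - 2*m) + (2*n^2 - 2*n) = k) ∧ m < n ∧ (m + n) % 2 = 1 then G (4*(m:ℤ) - 2) (4*(n:ℤ) - 2) else 0)).trans ?_
    refine (Finset.sum_congr rfl fun z _ => if_congr (guard_swap k _ z.1 z.2) rfl rfl).trans ?_
    refine (shape1 (fun p q => G (4*q - 2) (4*p - 2))).trans ?_
    refine Finset.sum_congr rfl fun z _ => ?_
    split_ifs with h
    · congr 1 <;> push_cast <;> ring
    · rfl
  have M4 : (∑ z ∈ range (k+2) ×ˢ range (k+2), if ((1 ≤ z.1 ∧ 1 ≤ z.2) ∧ (2*z.1^2 - 2*z.1) + (2*z.2^2 - 2*z.2) = k) ∧ z.1 < z.2 ∧ (z.1 + z.2) % 2 = 0 then G (4*(z.1:ℤ) - 2) (4*(z.2:ℤ) - 2) else 0) = (∑ z ∈ range (k+2) ×ˢ range (k+2), if ((1 ≤ z.1 ∧ 1 ≤ z.2) ∧ 4*z.1^2 + (4*z.2^2 - 4*z.2) = k) ∧ z.1 < z.2 then G (4*(z.1:ℤ) - 4*(z.2:ℤ)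 + 2) (2 - 4*(z.1:ℤ) - 4*(z.2:ℤ)) else 0) := by
    refine (swap_square (fun m n => if ((1 ≤ m ∧ 1 ≤ n) ∧ (2*m^2 - 2*m) + (2*n^2 - 2*n) = k) ∧ m < n ∧ (m + n) % 2 = 0 then G (4*(m:ℤ) - 2) (4*(n:ℤ) - 2) else 0)).trans ?_
    refine (Finset.sum_congr rfl fun z _ => if_congr (guard_swap k _ z.1 z.2) rfl rfl).trans ?_
    refine (shape2 (fun p q => G (4*q - 2) (4*p - 2))).trans ?_
    refine Finset.sum_congr rfl fun z _ => ?_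
    split_ifs with h
    · rw [show G (4*((z.2:ℤ) - (z.1:ℤ)) - 2) (4*((z.1:ℤ) + (z.2:ℤ)) - 2)
          = G (-(4*(z.1:ℤ) - 4*(z.2:ℤ) + 2)) (-(2 - 4*(z.1:ℤ) - 4*(z.2:ℤ))) from by congr 1 <;> ring, hG]
    · rfl
  have M5 : (∑ z ∈ range (k+2) ×ˢ range (k+2), if ((1 ≤ z.1 ∧ 1 ≤ z.2) ∧ (2*z.1^2 - 2*z.1) + (2*z.2^2 - 2*z.2) = k) ∧ z.1 = z.2 then G (4*(z.1:ℤ) - 2) (4*(z.2:ℤ) - 2) else 0) = (∑ b ∈ range (k+2), if (1 ≤ b ∧ 4*b^2 - 4*b = k) then G (4*(b:ℤ) - 2) (4*(b:ℤ) - 2) else 0) := by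
    refine (diagshape (fun p q => G (4*p - 2) (4*q - 2))).trans ?_
    rfl
  have M8 : (∑ z ∈ range (k+2) ×ˢ range (k+2), if ((1 ≤ z.1 ∧ 1 ≤ z.2) ∧ (2*z.1^2 - 2*z.1) + (2*z.2^2 - 2*z.2) = k) ∧ z.2 < z.1 ∧ (z.1 + z.2) % 2 = 1 then G (4*(z.1:ℤ) - 2) (2 - 4*(z.2:ℤ)) else 0) = (∑ z ∈ range (k+2) ×ˢ range (k+2), if ((1 ≤ z.1 ∧ 1 ≤ z.2) ∧ 4*z.1^2 + (4*z.2^2 - 4*z.2) = k) ∧ z.2 ≤ z.1 then G (4*(z.1:ℤ) + 4*(z.2:ℤ) - 2) (4*(z.2:ℤ) - 4*(z.1:ℤ) - 2) else 0) := by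
    refine (shape1 (fun p q => G (4*p - 2) (2 - 4*q))).trans ?_
    refine Finset.sum_congr rfl fun z _ => ?_
    split_ifs with h
    · congr 1 <;> push_cast <;> ring
    · rfl
  have M6 : (∑ z ∈ range (k+2) ×ˢ range (k+2), if ((1 ≤ z.1 ∧ 1 ≤ z.2) ∧ (2*z.1^2 - 2*z.1) + (2*z.2^2 - 2*z.2) = k) ∧ z.2 < z.1 ∧ (z.1 + z.2) % 2 = 0 then G (4*(z.1:ℤ) - 2) (2 - 4*(z.2:ℤ)) else 0) = (∑ z ∈ range (k+2) ×ˢ range (k+2), if ((1 ≤ z.1 ∧ 1 ≤ z.2) ∧ 4*z.1^2 + (4*z.2^2 - 4*z.2) = k) ∧ z.1 < z.2 then G (4*(z.1:ℤ) + 4*(z.2:ℤ) - 2) (4*(z.1:ℤ) - 4*(z.2:ℤ) + 2) else 0) := by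
    refine (shape2 (fun p q => G (4*p - 2) (2 - 4*q))).trans ?_
    refine Finset.sum_congr rfl fun z _ => ?_
    split_ifs with h
    · congr 1 <;> push_cast <;> ring
    · rfl
  have M9 : (∑ z ∈ range (k+2) ×ˢ range (k+2), if ((1 ≤ z.1 ∧ 1 ≤ z.2) ∧ (2*z.1^2 - 2*z.1) + (2*z.2^2 - 2*z.2) = k) ∧ z.1 < z.2 ∧ (z.1 + z.2) % 2 = 1 then G (4*(z.1:ℤ) - 2) (2 - 4*(z.2:ℤ)) else 0) = (∑ z ∈ range (k+2) ×ˢ range (k+2), if ((1 ≤ z.1 ∧ 1 ≤ z.2) ∧ 4*z.1^2 + (4*z.2^2 - 4*z.2) = k) ∧ z.2 ≤ z.1 then G (4*(z.1:ℤ) - 4*(z.2:ℤ) + 2) (2 - 4*(z.1:ℤ) - 4*(z.2:ℤ)) else 0) := by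
    refine (swap_square (fun m n => if ((1 ≤ m ∧ 1 ≤ n) ∧ (2*m^2 - 2*m) + (2*n^2 - 2*n) = k) ∧ m < n ∧ (m + n) % 2 = 1 then G (4*(m:ℤ) - 2) (2 - 4*(n:ℤ)) else 0)).trans ?_
    refine (Finset.sum_congr rfl fun z _ => if_congr (guard_swap k _ z.1 z.2) rfl rfl).trans ?_
    refine (shape1 (fun p q => G (4*q - 2) (2 - 4*p))).trans ?_
    refine Finset.sum_congr rfl fun z _ => ?_
    split_ifs with h
    · congr 1 <;> push_cast <;> ring
    · rfl
  have M7 : (∑ z ∈ range (k+2) ×ˢ range (k+2), if ((1 ≤ z.1 ∧ 1 ≤ z.2) ∧ (2*z.1^2 - 2*z.1) + (2*z.2^2 - 2*z.2) = k) ∧ z.1 < z.2 ∧ (z.1 + z.2) % 2 = 0 then G (4*(z.1:ℤ) - 2) (2 - 4*(z.2:ℤ)) else 0) = (∑ z ∈ range (k+2) ×ˢ range (k+2), if ((1 ≤ z.1 ∧ 1 ≤ z.2) ∧ 4*z.1^2 + (4*z.2^2 - 4*z.2) = k) ∧ z.1 < z.2 then G (4*(z.1:ℤ) - 4*(z.2:ℤ)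 + 2) (4*(z.1:ℤ) + 4*(z.2:ℤ) - 2) else 0) := by
    refine (swap_square (fun m n => if ((1 ≤ m ∧ 1 ≤ n) ∧ (2*m^2 - 2*m) + (2*n^2 - 2*n) = k) ∧ m < n ∧ (m + n) % 2 = 0 then G (4*(m:ℤ) - 2) (2 - 4*(n:ℤ)) else 0)).trans ?_
    refine (Finset.sum_congr rfl fun z _ => if_congr (guard_swap k _ z.1 z.2) rfl rfl).trans ?_
    refine (shape2 (fun p q => G (4*q - 2) (2 - 4*p))).trans ?_
    refine Finset.sum_congr rfl fun z _ => ?_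
    split_ifs with h
    · rw [show G (4*((z.2:ℤ) - (z.1:ℤ)) - 2) (2 - 4*((z.1:ℤ) + (z.2:ℤ)))
          = G (-(4*(z.1:ℤ) - 4*(z.2:ℤ) + 2)) (-(4*(z.1:ℤ) + 4*(z.2:ℤ) - 2)) from by congr 1 <;> ring, hG]
    · rfl
  have M10 : (∑ z ∈ range (k+2) ×ˢ range (k+2), if ((1 ≤ z.1 ∧ 1 ≤ z.2) ∧ (2*z.1^2 - 2*z.1) + (2*z.2^2 - 2*z.2) = k) ∧ z.1 = z.2 then G (4*(z.1:ℤ) - 2) (2 - 4*(z.2:ℤ)) else 0) = (∑ b ∈ range (k+2), if (1 ≤ b ∧ 4*b^2 - 4*b = k) then G (4*(b:ℤ) - 2) (2 - 4*(b:ℤ)) else 0) := by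
    refine (diagshape (fun p q => G (4*p - 2) (2 - 4*q))).trans ?_
    rfl
  have hL : (∑ z ∈ range (k+2) ×ˢ range (k+2), if ((1 ≤ z.1 ∧ 1 ≤ z.2) ∧ (2*z.1^2 - 2*z.1) + (2*z.2^2 - 2*z.2) = k) then G (4*(z.1:ℤ) - 2) (4*(z.2:ℤ) - 2) + G (4*(z.1:ℤ) - 2) (2 - 4*(z.2:ℤ)) else 0)
      = ((∑ z ∈ range (k+2) ×ˢ range (k+2), if ((1 ≤ z.1 ∧ 1 ≤ z.2) ∧ (2*z.1^2 - 2*z.1) + (2*z.2^2 - 2*z.2) = k) ∧ z.2 < z.1 ∧ (z.1 + z.2) % 2 = 1 then G (4*(z.1:ℤ) - 2) (4*(z.2:ℤ) - 2) else 0) + (∑ z ∈ range (k+2) ×ˢ range (k+2), if ((1 ≤ z.1 ∧ 1 ≤ z.2) ∧ (2*z.1^2 - 2*z.1) + (2*z.2^2 - 2*z.2) = k) ∧ z.2 < z.1 ∧ (z.1 + z.2) % 2 = 0 then G (4*(z.1:ℤ) - 2) (4*(z.2:ℤ) - 2) else 0) + (∑ z ∈ range (k+2) ×ˢ range (k+2),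 if ((1 ≤ z.1 ∧ 1 ≤ z.2) ∧ (2*z.1^2 - 2*z.1) + (2*z.2^2 - 2*z.2) = k) ∧ z.1 < z.2 ∧ (z.1 + z.2) % 2 = 1 then G (4*(z.1:ℤ) - 2) (4*(z.2:ℤ) - 2) else 0) + (∑ z ∈ range (k+2) ×ˢ range (k+2), if ((1 ≤ z.1 ∧ 1 ≤ z.2) ∧ (2*z.1^2 - 2*z.1) + (2*z.2^2 - 2*z.2) = k) ∧ z.1 < z.2 ∧ (z.1 + z.2) % 2 = 0 then G (4*(z.1:ℤ) - 2) (4*(z.2:ℤ) - 2) else 0) + (∑ z ∈ range (k+2) ×ˢ range (k+2), if ((1 ≤ z.1 ∧ 1 ≤ z.2) ∧ (2*z.1^2 - 2*z.1) + (2*z.2^2 - 2*z.2) = k) ∧ z.1 = z.2 then G (4*(z.1:ℤ) - 2) (4*(z.2:ℤ) - 2) else 0))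
      + ((∑ z ∈ range (k+2) ×ˢ range (k+2), if ((1 ≤ z.1 ∧ 1 ≤ z.2) ∧ (2*z.1^2 - 2*z.1) + (2*z.2^2 - 2*z.2) = k) ∧ z.2 < z.1 ∧ (z.1 + z.2) % 2 = 1 then G (4*(z.1:ℤ) - 2) (2 - 4*(z.2:ℤ)) else 0) + (∑ z ∈ range (k+2) ×ˢ range (k+2), if ((1 ≤ z.1 ∧ 1 ≤ z.2) ∧ (2*z.1^2 - 2*z.1) + (2*z.2^2 - 2*z.2) = k) ∧ z.2 < z.1 ∧ (z.1 + z.2) % 2 = 0 then G (4*(z.1:ℤ) - 2) (2 - 4*(z.2:ℤ)) else 0) + (∑ z ∈ range (k+2) ×ˢ range (k+2), if ((1 ≤ z.1 ∧ 1 ≤ z.2) ∧ (2*z.1^2 - 2*z.1) + (2*z.2^2 - 2*z.2) = k) ∧ z.1 < z.2 ∧ (z.1 + z.2) % 2 = 1 then G (4*(z.1:ℤ) - 2) (2 - 4*(z.2:ℤ)) else 0) + (∑ z ∈ range (k+2) ×ˢ range (k+2), if ((1 ≤ z.1 ∧ 1 ≤ z.2) ∧ (2*z.1^2 - 2*z.1)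 + (2*z.2^2 - 2*z.2) = k) ∧ z.1 < z.2 ∧ (z.1 + z.2) % 2 = 0 then G (4*(z.1:ℤ) - 2) (2 - 4*(z.2:ℤ)) else 0) + (∑ z ∈ range (k+2) ×ˢ range (k+2), if ((1 ≤ z.1 ∧ 1 ≤ z.2) ∧ (2*z.1^2 - 2*z.1) + (2*z.2^2 - 2*z.2) = k) ∧ z.1 = z.2 then G (4*(z.1:ℤ) - 2) (2 - 4*(z.2:ℤ)) else 0)) := by
    refine (Finset.sum_congr rfl fun z _ => split10 _ z.1 z.2 _ _).trans ?_
    rw [Finset.sum_add_distrib, Finset.sum_add_distrib, Finset.sum_add_distrib,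
      Finset.sum_add_distrib, Finset.sum_add_distrib, Finset.sum_add_distrib,
      Finset.sum_add_distrib, Finset.sum_add_distrib, Finset.sum_add_distrib]
  have hR3 : (∑ z ∈ range (k+2) ×ˢ range (k+2), if ((1 ≤ z.1 ∧ 1 ≤ z.2) ∧ 4*z.1^2 + (4*z.2^2 - 4*z.2) = k) then G (4*(z.1:ℤ) + 4*(z.2:ℤ) - 2) (4*(z.1:ℤ) - 4*(z.2:ℤ) + 2) + G (4*(z.1:ℤ) - 4*(z.2:ℤ) + 2) (4*(z.1:ℤ) + 4*(z.2:ℤ) - 2) else 0)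
      = ((∑ z ∈ range (k+2) ×ˢ range (k+2), if ((1 ≤ z.1 ∧ 1 ≤ z.2) ∧ 4*z.1^2 + (4*z.2^2 - 4*z.2) = k) ∧ z.2 ≤ z.1 then G (4*(z.1:ℤ) + 4*(z.2:ℤ) - 2) (4*(z.1:ℤ) - 4*(z.2:ℤ) + 2) else 0) + (∑ z ∈ range (k+2) ×ˢ range (k+2), if ((1 ≤ z.1 ∧ 1 ≤ z.2) ∧ 4*z.1^2 + (4*z.2^2 - 4*z.2) = k) ∧ z.1 < z.2 then G (4*(z.1:ℤ) + 4*(z.2:ℤ) - 2) (4*(z.1:ℤ) - 4*(z.2:ℤ) + 2) else 0)) + ((∑ z ∈ range (k+2) ×ˢ range (k+2), if ((1 ≤ z.1 ∧ 1 ≤ z.2) ∧ 4*z.1^2 + (4*z.2^2 - 4*z.2) = k) ∧ z.2 ≤ z.1 then G (4*(z.1:ℤ) - 4*(z.2:ℤ) + 2) (4*(z.1:ℤ) + 4*(z.2:ℤ) - 2) else 0) + (∑ z ∈ range (k+2) ×ˢ range (k+2), if ((1 ≤ z.1 ∧ 1 ≤ z.2) ∧ 4*z.1^2 + (4*z.2^2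 - 4*z.2) = k) ∧ z.1 < z.2 then G (4*(z.1:ℤ) - 4*(z.2:ℤ) + 2) (4*(z.1:ℤ) + 4*(z.2:ℤ) - 2) else 0)) := by
    refine (Finset.sum_congr rfl fun z _ => split4 _ z.1 z.2 _ _).trans ?_
    rw [Finset.sum_add_distrib, Finset.sum_add_distrib, Finset.sum_add_distrib]
  have hR4 : (∑ z ∈ range (k+2) ×ˢ range (k+2), if ((1 ≤ z.1 ∧ 1 ≤ z.2) ∧ 4*z.1^2 + (4*z.2^2 - 4*z.2) = k) then G (4*(z.1:ℤ) + 4*(z.2:ℤ) - 2) (4*(z.2:ℤ) - 4*(z.1:ℤ) - 2) + G (4*(z.1:ℤ) - 4*(z.2:ℤ) + 2) (2 - 4*(z.1:ℤ) - 4*(z.2:ℤ)) else 0)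
      = ((∑ z ∈ range (k+2) ×ˢ range (k+2), if ((1 ≤ z.1 ∧ 1 ≤ z.2) ∧ 4*z.1^2 + (4*z.2^2 - 4*z.2) = k) ∧ z.2 ≤ z.1 then G (4*(z.1:ℤ) + 4*(z.2:ℤ) - 2) (4*(z.2:ℤ) - 4*(z.1:ℤ) - 2) else 0) + (∑ z ∈ range (k+2) ×ˢ range (k+2), if ((1 ≤ z.1 ∧ 1 ≤ z.2) ∧ 4*z.1^2 + (4*z.2^2 - 4*z.2) = k) ∧ z.1 < z.2 then G (4*(z.1:ℤ) + 4*(z.2:ℤ) - 2) (4*(z.2:ℤ) - 4*(z.1:ℤ) - 2) else 0)) + ((∑ z ∈ range (k+2) ×ˢ range (k+2), if ((1 ≤ z.1 ∧ 1 ≤ z.2) ∧ 4*z.1^2 + (4*z.2^2 - 4*z.2) = k) ∧ z.2 ≤ z.1 then G (4*(z.1:ℤ) - 4*(z.2:ℤ) + 2) (2 - 4*(z.1:ℤ) - 4*(z.2:ℤ)) else 0) + (∑ z ∈ range (k+2) ×ˢ range (k+2), if ((1 ≤ z.1 ∧ 1 ≤ z.2) ∧ 4*z.1^2 + (4*z.2^2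 - 4*z.2) = k) ∧ z.1 < z.2 then G (4*(z.1:ℤ) - 4*(z.2:ℤ) + 2) (2 - 4*(z.1:ℤ) - 4*(z.2:ℤ)) else 0)) := by
    refine (Finset.sum_congr rfl fun z _ => split4 _ z.1 z.2 _ _).trans ?_
    rw [Finset.sum_add_distrib, Finset.sum_add_distrib, Finset.sum_add_distrib]
  rw [hL, hR3, hR4, M1, M2, M3, M4, M5, M6, M7, M8, M9, M10]
  ring


noncomputable def Gfun (α β : ℂ) : ℤ → ℤ → ℂ := fun p q => Complex.cos (p * α + q * β)

lemma Gfun_neg (α β : ℂ) : ∀ p q : ℤ, Gfun α β (-p) (-q) = Gfun α β p q := by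
  intro p q
  unfold Gfun
  rw [show ((-p : ℤ) : ℂ) * α + ((-q : ℤ) : ℂ) * β = -((p : ℂ) * α + (q : ℂ) * β) from by push_cast; ring,
    Complex.cos_neg]

lemma two_cos_cos (A B : ℂ) :
    2 * (Complex.cos A * Complex.cos B) = Complex.cos (A + B) + Complex.cos (A - B) := by
  rw [Complex.cos_add, Complex.cos_sub]; ring

lemma he1 : ∀ n : ℕ, 1 ≤ n → n < (2 * n ^ 2 - 2 * n) + 2 := by
  intro n hn
  have := le_sq' n
  have := sq_lin' n
  omega

lemma he3 : ∀ n : ℕ, 1 ≤ n → n < (4 * n ^ 2) + 2 := by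
  intro n hn
  have := le_sq' n
  omega

lemma he4 : ∀ n : ℕ, 1 ≤ n → n < (4 * n ^ 2 - 4 * n) + 2 := by
  intro n hn
  have := le_sq' n
  have := sq_lin' n
  omega

lemma coeff_two_mul (k : ℕ) (f : PowerSeries ℂ) :
    PowerSeries.coeff k (2 * f) = 2 * PowerSeries.coeff k f := by
  rw [show (2 : PowerSeries ℂ) = PowerSeries.C 2 from (map_ofNat (PowerSeries.C) 2).symm,
    PowerSeries.coeff_C_mul]

lemma key (α β : ℂ) :
    2 * ((mkSum (fun n => 2 * n ^ 2 - 2 * n) fun n => Complex.cos (((4 * (n : ℤ) - 2 : ℤ) : ℂ) * α)) * (mkSum (fun n => 2 * n ^ 2 - 2 * n) fun n => Complex.cos (((4 * (n : ℤ) - 2 : ℤ) : ℂ) * β))) =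
    (1 + 2 * (mkSum (fun n => 4 * n ^ 2) fun n => Complex.cos (((4 * (n : ℤ) : ℤ) : ℂ) * (α + β)))) * (mkSum (fun n => 4 * n ^ 2 - 4 * n) fun n => Complex.cos (((4 * (n : ℤ) - 2 : ℤ) : ℂ) * (α - β))) + (1 + 2 * (mkSum (fun n => 4 * n ^ 2) fun n => Complex.cos (((4 * (n : ℤ) : ℤ) : ℂ) * (α - β)))) * (mkSum (fun n => 4 * n ^ 2 - 4 * n) fun n => Complex.cos (((4 * (n : ℤ) - 2 : ℤ) : ℂ) * (α + β))) := by
  have hG := Gfun_neg α β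
  ext k
  rw [show (1 + 2 * (mkSum (fun n => 4 * n ^ 2) fun n => Complex.cos (((4 * (n : ℤ) : ℤ) : ℂ) * (α + β)))) * (mkSum (fun n => 4 * n ^ 2 - 4 * n) fun n => Complex.cos (((4 * (n : ℤ) - 2 : ℤ) : ℂ) * (α - β))) + (1 + 2 * (mkSum (fun n => 4 * n ^ 2) fun n => Complex.cos (((4 * (n : ℤ) : ℤ) : ℂ) * (α - β)))) * (mkSum (fun n => 4 * n ^ 2 - 4 * n) fun n => Complex.cos (((4 * (n : ℤ) - 2 : ℤ) : ℂ) * (α + β)))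
      = (mkSum (fun n => 4 * n ^ 2 - 4 * n) fun n => Complex.cos (((4 * (n : ℤ) - 2 : ℤ) : ℂ) * (α - β))) + (mkSum (fun n => 4 * n ^ 2 - 4 * n) fun n => Complex.cos (((4 * (n : ℤ) - 2 : ℤ) : ℂ) * (α + β))) + 2 * ((mkSum (fun n => 4 * n ^ 2) fun n => Complex.cos (((4 * (n : ℤ) : ℤ) : ℂ) * (α + β))) * (mkSum (fun n => 4 * n ^ 2 - 4 * n) fun n => Complex.cos (((4 * (n : ℤ) - 2 : ℤ) : ℂ) * (α - β)))) + 2 * ((mkSum (fun n => 4 * n ^ 2) fun n => Complex.cos (((4 * (n : ℤ) : ℤ) : ℂ) * (α - β))) * (mkSum (fun n => 4 * n ^ 2 - 4 * n) fun n => Complex.cos (((4 * (n : ℤ) - 2 : ℤ) : ℂ) * (α + β)))) from by ring]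
  rw [map_add, map_add, map_add, coeff_two_mul, coeff_two_mul, coeff_two_mul]
  rw [coeff_mul_mkSum _ _ _ _ he1 he1 k, coeff_mul_mkSum _ _ _ _ he3 he4 k,
    coeff_mul_mkSum _ _ _ _ he3 he4 k,
    mkSum_coeff _ _ he4 k (k+2) le_rfl, mkSum_coeff _ _ he4 k (k+2) le_rfl]
  have gdef : ∀ p q : ℤ, Gfun α β p q = Complex.cos (p * α + q * β) := fun _ _ => rfl
  refine Eq.trans ?_ (Eq.trans (combinat k (Gfun α β) hG
    (fun f => shape1 k f) (fun f => shape2 k f) (fun f => diagshape k f)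
    (fun h => swap_square _ h)) ?_)
  · rw [Finset.mul_sum]
    refine Finset.sum_congr rfl fun z _ => ?_
    rw [mul_ite, mul_zero]
    split_ifs with h
    · refine (two_cos_cos _ _).trans ?_
      rw [gdef, gdef]
      congr 1 <;> (push_cast; ring)
    · rfl
  · refine congrArg₂ HAdd.hAdd (congrArg₂ HAdd.hAdd (congrArg₂ HAdd.hAdd ?_ ?_) ?_) ?_
    · refine Finset.sum_congr rfl fun b _ => ?_
      split_ifs with h
      · rw [gdef]; congr 1; push_cast; ring
      · rfl
    · refine Finset.sum_congr rfl fun b _ => ?_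
      split_ifs with h
      · rw [gdef]; congr 1; push_cast; ring
      · rfl
    · rw [Finset.mul_sum]
      refine Finset.sum_congr rfl fun z _ => ?_
      rw [mul_ite, mul_zero]
      split_ifs with h
      · refine Eq.symm ((two_cos_cos _ _).trans ?_)
        rw [gdef, gdef]
        congr 1 <;> (push_cast; ring)
      · rfl
    · rw [Finset.mul_sum]
      refine Finset.sum_congr rfl fun z _ => ?_
      rw [mul_ite, mul_zero]
      split_ifs with h
      · refine Eq.symm ((two_cos_cos _ _).trans ?_)
        rw [gdef, gdef]
        congr 1 <;> (push_cast; ring)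
      · rfl

lemma mkSum_congr (e : ℕ → ℕ) (c c' : ℕ → ℂ) (h : ∀ n, c n = c' n) :
    mkSum e c = mkSum e c' := by
  unfold mkSum
  congr 1
  funext k
  exact Finset.sum_congr rfl fun n _ => by rw [h n]

lemma mkSum_cheb (e : ℕ → ℕ) (g : ℕ → ℤ) (w θ : ℂ) (hw : w = Complex.cos θ) :
    mkSum e (fun n => (Polynomial.Chebyshev.T ℂ (g n)).eval w)
      = mkSum e (fun n => Complex.cos ((g n : ℂ) * θ)) :=
  mkSum_congr _ _ _ fun n => by
    rw [hw, Polynomial.Chebyshev.T_complex_cos]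


/-- If complex numbers `x, y, u, v` satisfy `u + v = xy` and `uv = x² + y² - 4`, then in `ℂ[[q]]`:
`2 (∑ T_{4n-2}(x/2) q^{2n²-2n})(∑ T_{4n-2}(y/2) q^{2n²-2n})
  = (1 + 2∑ T_{4n}(u/2) q^{4n²})(∑ T_{4n-2}(v/2) q^{4n²-4n})
    + (1 + 2∑ T_{4n}(v/2) q^{4n²})(∑ T_{4n-2}(u/2) q^{4n²-4n})`. -/
theorem cheby_xyuv_odd (x y u v : ℂ) (h1 : u + v = x * y) (h2 : u * v = x ^ 2 + y ^ 2 - 4) :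
    2 * ((mkSum (fun n => 2 * n ^ 2 - 2 * n) fun n =>
        (Polynomial.Chebyshev.T ℂ (4 * (n : ℤ) - 2)).eval (x / 2)) *
      (mkSum (fun n => 2 * n ^ 2 - 2 * n) fun n =>
        (Polynomial.Chebyshev.T ℂ (4 * (n : ℤ) - 2)).eval (y / 2))) =
    (1 + 2 * mkSum (fun n => 4 * n ^ 2) fun n =>
        (Polynomial.Chebyshev.T ℂ (4 * (n : ℤ))).eval (u / 2)) *
      (mkSum (fun n => 4 * n ^ 2 - 4 * n) fun n =>
        (Polynomial.Chebyshev.T ℂ (4 * (n : ℤ) - 2)).eval (v / 2)) +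
    (1 + 2 * mkSum (fun n => 4 * n ^ 2) fun n =>
        (Polynomial.Chebyshev.T ℂ (4 * (n : ℤ))).eval (v / 2)) *
      (mkSum (fun n => 4 * n ^ 2 - 4 * n) fun n =>
        (Polynomial.Chebyshev.T ℂ (4 * (n : ℤ) - 2)).eval (u / 2)) := by
  obtain ⟨α, hα⟩ := Complex.cos_surjective (x / 2)
  obtain ⟨β, hβ⟩ := Complex.cos_surjective (y / 2)
  have hx : x / 2 = Complex.cos α := hα.symm
  have hy : y / 2 = Complex.cos β := hβ.symm
  have pα := Complex.sin_sq_add_cos_sq α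
  have pβ := Complex.sin_sq_add_cos_sq β
  have hAB1 : 2 * Complex.cos (α + β) + 2 * Complex.cos (α - β) = x * y := by
    rw [Complex.cos_add, Complex.cos_sub,
      show x = 2 * Complex.cos α from by linear_combination (-2) * hα,
      show y = 2 * Complex.cos β from by linear_combination (-2) * hβ]
    ring
  have hAB2 : (2 * Complex.cos (α + β)) * (2 * Complex.cos (α - β)) = x ^ 2 + y ^ 2 - 4 := by
    rw [Complex.cos_add, Complex.cos_sub,
      show x = 2 * Complex.cos α from by linear_combination (-2) * hα,
      show y = 2 * Complex.cos β from by linear_combination (-2) * hβ]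
    linear_combination (-4 * Complex.sin β ^ 2) * pα + (4 * Complex.cos α ^ 2 - 4) * pβ
  have hroot : (u - 2 * Complex.cos (α + β)) * (u - 2 * Complex.cos (α - β)) = 0 := by
    linear_combination (-u) * hAB1 + hAB2 + u * h1 - h2
  rw [mkSum_cheb _ _ _ α hx, mkSum_cheb _ _ _ β hy]
  rcases mul_eq_zero.1 hroot with h | h
  · have hu : u / 2 = Complex.cos (α + β) := by
      have := sub_eq_zero.1 h
      rw [this]; ring
    have hv : v / 2 = Complex.cos (α - β) := by
      have hu' := sub_eq_zero.1 h
      have : v = 2 * Complex.cos (α - β) := by linear_combination h1 - hAB1 - hu'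
      rw [this]; ring
    rw [mkSum_cheb _ _ _ (α + β) hu, mkSum_cheb _ _ _ (α + β) hu,
      mkSum_cheb _ _ _ (α - β) hv, mkSum_cheb _ _ _ (α - β) hv]
    linear_combination key α β
  · have hu : u / 2 = Complex.cos (α - β) := by
      have := sub_eq_zero.1 h
      rw [this]; ring
    have hv : v / 2 = Complex.cos (α + β) := by
      have hu' := sub_eq_zero.1 h
      have : v = 2 * Complex.cos (α + β) := by linear_combination h1 - hAB1 - hu'
      rw [this]; ring
    rw [mkSum_cheb _ _ _ (α - β) hu, mkSum_cheb _ _ _ (α - β) hu,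
      mkSum_cheb _ _ _ (α + β) hv, mkSum_cheb _ _ _ (α + β) hv]
    linear_combination key α β
end
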